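/- arXiv:2512.14301 — 7 statements merged into one kernel-verified Lean document; each statement's English description precedes it below -/
import Mathlib

section
/- Suppose λ : ℕ → ℝ (indexed from 1) is a strictly increasing sequence of the form λ_j = (π²/B²)·j² + a₀ + α(j) for all j ≥ 1, where B > 0 and a₀ ∈ ℝ are constants and α : ℕ → ℝ satisfies |α(j)| ≤ C·j⁻² for all j ≥ 1 and some constant C > 0. Then there exist constants 0 < υ ≤ Υ such that for all integers 1 ≤ n ≤ m, υ·(m² − n²) ≤ λ_m − λ_n ≤ Υ·(m² − n²). -/
set_option maxHeartbeats 1000000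


theorem stmt0 (lam α : ℕ → ℝ) (B a₀ C : ℝ)
    (hB : 0 < B) (hC : 0 < C)
    (hα : ∀ j : ℕ, 1 ≤ j → |α j| ≤ C / (j : ℝ) ^ 2)
    (hlam : ∀ j : ℕ, 1 ≤ j →
      lam j = Real.pi ^ 2 / B ^ 2 * (j : ℝ) ^ 2 + a₀ + α j)
    (hmono : ∀ n m : ℕ, 1 ≤ n → n < m → lam n < lam m) :
    ∃ υ Υ : ℝ, 0 < υ ∧ υ ≤ Υ ∧
      ∀ n m : ℕ, 1 ≤ n → n ≤ m →
        υ * ((m : ℝ) ^ 2 - (n : ℝ) ^ 2) ≤ lam m - lam n ∧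
        lam m - lam n ≤ Υ * ((m : ℝ) ^ 2 - (n : ℝ) ^ 2) := by
  set K : ℝ := Real.pi ^ 2 / B ^ 2 with hKdef
  have hKpos : 0 < K := by
    have hp := Real.pi_pos
    positivity
  obtain ⟨N₀, hN₀⟩ := exists_nat_ge (4 * C / K)
  set N : ℕ := N₀ + 1 with hNdef
  have hNR : 4 * C / K ≤ (N : ℝ) := by
    rw [hNdef]; push_cast; linarith
  set F : Finset (ℕ × ℕ) := Finset.Icc 1 N ×ˢ Finset.Icc 1 N with hFdef
  have hne : F.Nonempty := ⟨(1, 1), by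
    simp only [hFdef, Finset.mem_product, Finset.mem_Icc, hNdef]; omega⟩
  set f : ℕ × ℕ → ℝ := fun p =>
    if p.1 < p.2 then (lam p.2 - lam p.1) / ((p.2 : ℝ) ^ 2 - (p.1 : ℝ) ^ 2) else 1
    with hfdef
  set ε : ℝ := F.inf' hne f with hεdef
  have hεpos : 0 < ε := by
    rw [hεdef, Finset.lt_inf'_iff]
    intro p hp
    rw [hfdef]
    dsimp only
    split_ifs with h
    · have hp1 : 1 ≤ p.1 := by
        simp only [hFdef, Finset.mem_product, Finset.mem_Icc] at hp
        exact hp.1.1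
      have hlt : lam p.1 < lam p.2 := hmono p.1 p.2 hp1 h
      have hcast : (p.1 : ℝ) < p.2 := by exact_mod_cast h
      have hp1' : (0:ℝ) ≤ p.1 := by positivity
      exact div_pos (by linarith) (by nlinarith)
    · norm_num
  clear_value K N F f ε
  refine ⟨min (K/2) ε, K + 2*C/3, lt_min (by positivity) hεpos, ?_, ?_⟩
  · have h1 : min (K/2) ε ≤ K/2 := min_le_left _ _
    linarith
  intro n m hn hnm
  rcases eq_or_lt_of_le hnm with rfl | hlt
  · simp
  have hn1 : (1:ℝ) ≤ n := by exact_mod_cast hn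
  have hm1 : (n:ℝ) + 1 ≤ m := by exact_mod_cast hlt
  have hd : (0:ℝ) < (m:ℝ)^2 - (n:ℝ)^2 := by nlinarith
  have hd3 : (3:ℝ) ≤ (m:ℝ)^2 - (n:ℝ)^2 := by nlinarith
  have hαn : |α n| ≤ C := by
    refine (hα n hn).trans ?_
    rw [div_le_iff₀ (by positivity)]
    nlinarith [mul_nonneg (le_of_lt hC) (by nlinarith : (0:ℝ) ≤ (n:ℝ)^2 - 1)]
  have hαm : |α m| ≤ C := by
    have hm : 1 ≤ m := le_trans hn hnm
    have hm1' : (1:ℝ) ≤ m := by exact_mod_cast hm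
    refine (hα m hm).trans ?_
    rw [div_le_iff₀ (by positivity)]
    nlinarith [mul_nonneg (le_of_lt hC) (by nlinarith : (0:ℝ) ≤ (m:ℝ)^2 - 1)]
  have hαn' := abs_le.mp hαn
  have hαm' := abs_le.mp hαm
  have heq : lam m - lam n = K * ((m:ℝ)^2 - (n:ℝ)^2) + (α m - α n) := by
    rw [hlam m (le_trans hn hnm), hlam n hn]; ring
  constructor
  · by_cases hcase : 4 * C / K ≤ (m:ℝ)^2 - (n:ℝ)^2
    · rw [div_le_iff₀ hKpos] at hcase
      have hmin : min (K/2) ε ≤ K/2 := min_le_left _ _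
      nlinarith [mul_le_mul_of_nonneg_right hmin (le_of_lt hd)]
    · push_neg at hcase
      have hmN : m ≤ N := by
        have hprod : (0:ℝ) ≤ ((m:ℝ) - n - 1) * ((m:ℝ) + n) := by
          apply mul_nonneg <;> nlinarith
        have hfin : (m:ℝ) ≤ N := by nlinarith
        exact_mod_cast hfin
      have hmem : (n, m) ∈ F := by
        simp only [hFdef, Finset.mem_product, Finset.mem_Icc]
        exact ⟨⟨hn, le_trans hnm hmN⟩, ⟨le_trans hn hnm, hmN⟩⟩
      have hle : ε ≤ f (n, m) := by rw [hεdef]; exact Finset.inf'_le f hmem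
      rw [hfdef] at hle
      simp only [if_pos hlt] at hle
      have hratio : min (K/2) ε ≤ (lam m - lam n) / ((m:ℝ)^2 - (n:ℝ)^2) :=
        le_trans (min_le_right _ _) hle
      calc min (K/2) ε * ((m:ℝ)^2 - (n:ℝ)^2)
          ≤ (lam m - lam n) / ((m:ℝ)^2 - (n:ℝ)^2) * ((m:ℝ)^2 - (n:ℝ)^2) :=
            mul_le_mul_of_nonneg_right hratio (le_of_lt hd)
        _ = lam m - lam n := div_mul_cancel₀ _ (ne_of_gt hd)
  · nlinarith [mul_nonneg (le_of_lt hC) (by linarith : (0:ℝ) ≤ (m:ℝ)^2 - (n:ℝ)^2 - 3)]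
end

section
/- Fix Δ > 0, η ∈ (0,1), and N₂ ∈ ℕ. Then there exist constants γ_y > 0, γ_λ > 0, Γ > 0 (with Γ depending only on η and υ) and N₀ ∈ ℕ such that for every N₁ ≥ N₀ and every n ∈ {1,…,⌊η·N₁⌋}: |𝒦_y(n)| ≤ γ_y·exp(−Γ·Δ·N₁³) and |𝒦_λ(n)| ≤ γ_λ·exp(−Γ·Δ·N₁³). -/
/-- The nodes `φ_n = exp(-Δ·λ_n)`. -/
noncomputable def phi (lam : ℕ → ℝ) (Δ : ℝ) (n : ℕ) : ℝ := Real.exp (-Δ * lam n)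

/-- Lagrange basis polynomial `L_n(z)` on the nodes `φ_1, …, φ_{N₁}`. -/
noncomputable def Lag (lam : ℕ → ℝ) (Δ : ℝ) (N₁ n : ℕ) (z : ℝ) : ℝ :=
  ∏ j ∈ (Finset.Icc 1 N₁).erase n, (z - phi lam Δ j) / (phi lam Δ n - phi lam Δ j)

/-- `L_n'(φ_n) = Σ_{k ≤ N₁, k ≠ n} 1/(φ_n − φ_k)`. -/
noncomputable def LagD (lam : ℕ → ℝ) (Δ : ℝ) (N₁ n : ℕ) : ℝ :=
  ∑ k ∈ (Finset.Icc 1 N₁).erase n, 1 / (phi lam Δ n - phi lam Δ k)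

/-- Hermite basis polynomial `H_n(z) = (1 − 2(z − φ_n)L_n'(φ_n))·L_n(z)²`. -/
noncomputable def HermH (lam : ℕ → ℝ) (Δ : ℝ) (N₁ n : ℕ) (z : ℝ) : ℝ :=
  (1 - 2 * (z - phi lam Δ n) * LagD lam Δ N₁ n) * (Lag lam Δ N₁ n z) ^ 2

/-- Hermite basis polynomial `H̃_n(z) = (z − φ_n)·L_n(z)²`. -/
noncomputable def HermHt (lam : ℕ → ℝ) (Δ : ℝ) (N₁ n : ℕ) (z : ℝ) : ℝ :=
  (z - phi lam Δ n) * (Lag lam Δ N₁ n z) ^ 2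

/-- First-order condition number for the amplitudes:
`𝒦_y(n) = Σ_{m=N₁+1}^{N₁+N₂} y_m·H_n(φ_m)`. -/
noncomputable def Ky (lam y : ℕ → ℝ) (Δ : ℝ) (N₁ N₂ n : ℕ) : ℝ :=
  ∑ m ∈ Finset.Icc (N₁ + 1) (N₁ + N₂), y m * HermH lam Δ N₁ n (phi lam Δ m)

/-- First-order condition number for the exponents:
`𝒦_λ(n) = −(Δ·y_n·φ_n)⁻¹·Σ_{m=N₁+1}^{N₁+N₂} y_m·H̃_n(φ_m)`. -/
noncomputable def Kl (lam y : ℕ → ℝ) (Δ : ℝ) (N₁ N₂ n : ℕ) : ℝ :=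
  -(Δ * y n * phi lam Δ n)⁻¹ *
    ∑ m ∈ Finset.Icc (N₁ + 1) (N₁ + N₂), y m * HermHt lam Δ N₁ n (phi lam Δ m)

lemma phi_pos (lam : ℕ → ℝ) (Δ : ℝ) (n : ℕ) : 0 < phi lam Δ n := Real.exp_pos _

lemma phi_mul (lam : ℕ → ℝ) (Δ : ℝ) (j k : ℕ) :
    phi lam Δ k = phi lam Δ j * Real.exp (-Δ * (lam k - lam j)) := by
  unfold phi; rw [← Real.exp_add]; ring_nf

lemma phi_lt (lam : ℕ → ℝ) {Δ : ℝ} (hΔ : 0 < Δ)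
    (hmono : ∀ n m : ℕ, 1 ≤ n → n < m → lam n < lam m)
    {j k : ℕ} (hj : 1 ≤ j) (hjk : j < k) : phi lam Δ k < phi lam Δ j := by
  have := hmono j k hj hjk
  exact Real.exp_lt_exp.mpr (by nlinarith)

lemma sq_sub_ge {j k : ℕ} (hjk : j < k) : (1:ℝ) ≤ (k:ℝ)^2 - (j:ℝ)^2 := by
  have h : (j:ℝ) + 1 ≤ k := by exact_mod_cast hjk
  have h0 : (0:ℝ) ≤ j := Nat.cast_nonneg j
  nlinarith

lemma den_lb (lam : ℕ → ℝ) {Δ υ Υ : ℝ} (hΔ : 0 < Δ)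
    (hgap : ∀ n m : ℕ, 1 ≤ n → n ≤ m →
      υ * ((m : ℝ) ^ 2 - (n : ℝ) ^ 2) ≤ lam m - lam n ∧
      lam m - lam n ≤ Υ * ((m : ℝ) ^ 2 - (n : ℝ) ^ 2))
    (hυ : 0 < υ)
    {j k : ℕ} (hj : 1 ≤ j) (hjk : j < k) :
    phi lam Δ j * (1 - Real.exp (-(Δ*υ))) ≤ phi lam Δ j - phi lam Δ k := by
  have h := (hgap j k hj hjk.le).1
  have hsq := sq_sub_ge hjk
  have h1 : υ ≤ lam k - lam j := by nlinarith
  have h2 : Real.exp (-Δ * (lam k - lam j)) ≤ Real.exp (-(Δ*υ)) :=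
    Real.exp_le_exp.mpr (by nlinarith)
  rw [phi_mul lam Δ j k]
  have hp := phi_pos lam Δ j
  nlinarith

lemma decay (lam : ℕ → ℝ) {Δ υ Υ : ℝ} (hΔ : 0 < Δ)
    (hgap : ∀ n m : ℕ, 1 ≤ n → n ≤ m →
      υ * ((m : ℝ) ^ 2 - (n : ℝ) ^ 2) ≤ lam m - lam n ∧
      lam m - lam n ≤ Υ * ((m : ℝ) ^ 2 - (n : ℝ) ^ 2))
    {n j : ℕ} (hn : 1 ≤ n) (hnj : n < j) :
    phi lam Δ j ≤ phi lam Δ n * Real.exp (-(Δ*υ) * ((j:ℝ)^2 - (n:ℝ)^2)) := by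
  have h := (hgap n j hn hnj.le).1
  rw [phi_mul lam Δ n j]
  exact mul_le_mul_of_nonneg_left (Real.exp_le_exp.mpr (by nlinarith)) (phi_pos lam Δ n).le

set_option maxHeartbeats 2000000 in
theorem stmt2 (lam y : ℕ → ℝ) (υ Υ ℓ Δ η : ℝ) (N₂ : ℕ)
    (hυ : 0 < υ) (hυΥ : υ ≤ Υ)
    (hmono : ∀ n m : ℕ, 1 ≤ n → n < m → lam n < lam m)
    (hgap : ∀ n m : ℕ, 1 ≤ n → n ≤ m →
      υ * ((m : ℝ) ^ 2 - (n : ℝ) ^ 2) ≤ lam m - lam n ∧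
      lam m - lam n ≤ Υ * ((m : ℝ) ^ 2 - (n : ℝ) ^ 2))
    (hℓ : 1 < ℓ) (hy : ∀ n : ℕ, 1 ≤ n → ℓ⁻¹ ≤ |y n| ∧ |y n| ≤ ℓ)
    (hΔ : 0 < Δ) (hη : 0 < η) (hη1 : η < 1) (hN₂ : 1 ≤ N₂) :
    ∃ γy γl Γ : ℝ, 0 < γy ∧ 0 < γl ∧ 0 < Γ ∧
      ∃ N₀ : ℕ, ∀ N₁ : ℕ, N₀ ≤ N₁ →
        ∀ n : ℕ, 1 ≤ n → n ≤ ⌊η * (N₁ : ℝ)⌋₊ →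
          |Ky lam y Δ N₁ N₂ n| ≤ γy * Real.exp (-Γ * Δ * (N₁ : ℝ) ^ 3) ∧
          |Kl lam y Δ N₁ N₂ n| ≤ γl * Real.exp (-Γ * Δ * (N₁ : ℝ) ^ 3) := by
  have hexp1 : Real.exp (-(Δ*υ)) < 1 := by
    rw [Real.exp_lt_one_iff]; nlinarith
  have hexp0 : 0 < Real.exp (-(Δ*υ)) := Real.exp_pos _
  obtain ⟨c, hc_def⟩ : ∃ c : ℝ, c = 1 - Real.exp (-(Δ*υ)) := ⟨_, rfl⟩
  have hc0 : 0 < c := by rw [hc_def]; linarith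
  have hc1 : c ≤ 1 := by rw [hc_def]; linarith
  obtain ⟨B, hB_def⟩ : ∃ B : ℝ, B = c⁻¹ := ⟨_, rfl⟩
  have hB0 : 0 < B := by rw [hB_def]; exact inv_pos.mpr hc0
  have hB1 : 1 ≤ B := by
    rw [hB_def]
    exact (one_le_inv_iff₀).mpr ⟨hc0, hc1⟩
  obtain ⟨θ, hθ_def⟩ : ∃ θ : ℝ, θ = (1+η)/2 := ⟨_, rfl⟩
  have hηθ : η < θ := by rw [hθ_def]; linarith
  have hθ1 : θ < 1 := by rw [hθ_def]; linarith
  have hθ0 : 0 < θ := by linarith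
  have hθη2 : 0 < θ^2 - η^2 := by nlinarith
  obtain ⟨Γ, hΓ_def⟩ : ∃ Γ : ℝ, Γ = υ * (1-θ) * (θ^2 - η^2) / 2 := ⟨_, rfl⟩
  have hΓ0 : 0 < Γ := by
    rw [hΓ_def]
    have h1 : 0 < 1 - θ := by linarith
    positivity
  have hN₂0 : (0:ℝ) < N₂ := by exact_mod_cast Nat.lt_of_lt_of_le Nat.zero_lt_one hN₂
  have hℓ0 : (0:ℝ) < ℓ := by linarith
  refine ⟨N₂ * ℓ, N₂ * ℓ^2 / Δ, Γ, by positivity, by positivity, hΓ0,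
    ⌈4*B/(Γ*Δ)⌉₊ + 1, ?_⟩
  intro N₁ hN₁ n hn1 hn2
  have hceil : 4*B/(Γ*Δ) ≤ (N₁:ℝ) := by
    calc 4*B/(Γ*Δ) ≤ (⌈4*B/(Γ*Δ)⌉₊ : ℝ) := Nat.le_ceil _
    _ ≤ N₁ := by exact_mod_cast le_trans (Nat.le_succ _) hN₁
  have hN₁1 : 1 ≤ N₁ := le_trans (Nat.le_add_left 1 _) hN₁
  have hN₁R : (1:ℝ) ≤ N₁ := by exact_mod_cast hN₁1
  have hnη : (n:ℝ) ≤ η * N₁ := (Nat.le_floor_iff (by positivity)).mp hn2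
  have hn1R : (1:ℝ) ≤ n := by exact_mod_cast hn1
  have hnN₁ : n < N₁ := by
    by_contra h
    push_neg at h
    have h2 : (N₁:ℝ) ≤ n := by exact_mod_cast h
    nlinarith
  obtain ⟨X, hX_def⟩ : ∃ X : ℝ, X = Γ * Δ * (N₁:ℝ)^3 := ⟨_, rfl⟩
  have hX0 : 0 < X := by rw [hX_def]; positivity
  -- absorption of polynomial factors
  have hN₁0 : (0:ℝ) ≤ N₁ := by positivity
  have hNB : 4*(N₁:ℝ)*B ≤ 3*X := by
    have h1 : 4*B ≤ Γ*Δ*N₁ := by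
      rw [div_le_iff₀ (by positivity)] at hceil; linarith
    have h2 : (N₁:ℝ)*(4*B) ≤ (N₁:ℝ)*(Γ*Δ*N₁) := mul_le_mul_of_nonneg_left h1 hN₁0
    have h4 : (0:ℝ) ≤ (N₁:ℝ)^2*((N₁:ℝ)-1) := mul_nonneg (sq_nonneg _) (by linarith)
    have h3 : Γ*Δ*(N₁:ℝ)^2 ≤ Γ*Δ*(N₁:ℝ)^3 := by nlinarith [mul_nonneg (mul_pos hΓ0 hΔ).le h4]
    rw [hX_def]; nlinarith [h2, h3, hX0]
  have hpow : B^N₁ ≤ Real.exp ((N₁:ℝ) * B) := by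
    have hlogB : Real.log B ≤ B :=
      le_trans (Real.log_le_sub_one_of_pos hB0) (by linarith)
    calc B^N₁ = Real.exp (Real.log B)^N₁ := by rw [Real.exp_log hB0]
    _ = Real.exp ((N₁:ℝ) * Real.log B) := (Real.exp_nat_mul _ N₁).symm
    _ ≤ Real.exp ((N₁:ℝ) * B) := Real.exp_le_exp.mpr (by nlinarith [Nat.cast_nonneg (α := ℝ) N₁])
  have hBsq : (B^N₁)^2 ≤ Real.exp (2*(N₁:ℝ)*B) := by
    calc (B^N₁)^2 ≤ (Real.exp ((N₁:ℝ)*B))^2 := by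
          apply pow_le_pow_left₀ (by positivity) hpow
    _ = Real.exp (2*(N₁:ℝ)*B) := by
          rw [sq, ← Real.exp_add]; ring_nf
  have habs : (1 + 2*(N₁:ℝ)*B) * (B^N₁)^2 ≤ Real.exp (3*X) := by
    have hone : 1 + 2*(N₁:ℝ)*B ≤ Real.exp (2*(N₁:ℝ)*B) := by
      have := Real.add_one_le_exp (2*(N₁:ℝ)*B); linarith
    calc (1 + 2*(N₁:ℝ)*B) * (B^N₁)^2
        ≤ Real.exp (2*(N₁:ℝ)*B) * Real.exp (2*(N₁:ℝ)*B) := by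
          apply mul_le_mul hone hBsq (by positivity) (by positivity)
    _ = Real.exp (4*(N₁:ℝ)*B) := by rw [← Real.exp_add]; ring_nf
    _ ≤ Real.exp (3*X) := Real.exp_le_exp.mpr hNB
  -- basic set
  obtain ⟨E, hE_def⟩ : ∃ E : Finset ℕ, E = (Finset.Icc 1 N₁).erase n := ⟨_, rfl⟩
  have hmemE : ∀ j ∈ E, 1 ≤ j ∧ j ≤ N₁ ∧ j ≠ n := by
    intro j hj
    rw [hE_def, Finset.mem_erase, Finset.mem_Icc] at hj
    exact ⟨hj.2.1, hj.2.2, hj.1⟩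
  have hcardE : (E.card : ℝ) ≤ N₁ := by
    have h1 : E.card ≤ (Finset.Icc 1 N₁).card := by rw [hE_def]; exact Finset.card_erase_le
    have h2 : (Finset.Icc 1 N₁).card = N₁ := by rw [Nat.card_Icc]; omega
    exact_mod_cast h1.trans_eq h2
  -- denominator lower bound
  have hden : ∀ j ∈ E, c * phi lam Δ n ≤ |phi lam Δ n - phi lam Δ j| := by
    intro j hj
    obtain ⟨hj1, hjN, hjn⟩ := hmemE j hj
    have hpn := phi_pos lam Δ n
    rcases lt_or_gt_of_ne hjn with hlt | hgt
    · have h1 := den_lb lam hΔ hgap hυ hj1 hlt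
      rw [← hc_def] at h1
      have h2 : phi lam Δ n < phi lam Δ j := phi_lt lam hΔ hmono hj1 hlt
      rw [abs_sub_comm, abs_of_pos (by linarith)]
      nlinarith
    · have h1 := den_lb lam hΔ hgap hυ hn1 hgt
      rw [← hc_def] at h1
      have h2 : phi lam Δ j < phi lam Δ n := phi_lt lam hΔ hmono hn1 hgt
      rw [abs_of_pos (by linarith)]
      linarith
  have hcφ : 0 < c * phi lam Δ n := mul_pos hc0 (phi_pos lam Δ n)
  -- LagD bound
  have hLagD : |LagD lam Δ N₁ n| ≤ (N₁:ℝ) * B / phi lam Δ n := by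
    unfold LagD
    rw [← hE_def]
    calc |∑ k ∈ E, 1 / (phi lam Δ n - phi lam Δ k)|
        ≤ ∑ k ∈ E, |1 / (phi lam Δ n - phi lam Δ k)| := Finset.abs_sum_le_sum_abs _ _
    _ ≤ ∑ _k ∈ E, 1/(c * phi lam Δ n) := by
        apply Finset.sum_le_sum
        intro k hk
        rw [abs_div, abs_one]
        exact one_div_le_one_div_of_le hcφ (hden k hk)
    _ = (E.card : ℝ) * (1/(c * phi lam Δ n)) := by
        rw [Finset.sum_const, nsmul_eq_mul]
    _ ≤ (N₁:ℝ) * (1/(c * phi lam Δ n)) := by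
        apply mul_le_mul_of_nonneg_right hcardE (one_div_nonneg.mpr hcφ.le)
    _ = (N₁:ℝ) * B / phi lam Δ n := by
        rw [hB_def]; field_simp
  -- main Lagrange bound
  have hLagm : ∀ m : ℕ, N₁ < m →
      |Lag lam Δ N₁ n (phi lam Δ m)| ≤ B^N₁ * Real.exp (-(2*X)) := by
    intro m hm
    have hg : ∀ j : ℕ, (0:ℝ) ≤ (if n < j then Δ*υ*((j:ℝ)^2-(n:ℝ)^2) else 0) := by
      intro j
      split
      · rename_i hnj
        have h5 : (n:ℝ) ≤ j := by exact_mod_cast hnj.le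
        have h6 : (0:ℝ) ≤ n := Nat.cast_nonneg n
        have h7 : (n:ℝ)^2 ≤ (j:ℝ)^2 := by nlinarith
        exact mul_nonneg (mul_pos hΔ hυ).le (by linarith)
      · exact le_refl 0
    have hfac : ∀ j ∈ E,
        |(phi lam Δ m - phi lam Δ j) / (phi lam Δ n - phi lam Δ j)|
          ≤ B * Real.exp (-(if n < j then Δ*υ*((j:ℝ)^2-(n:ℝ)^2) else 0)) := by
      intro j hj
      obtain ⟨hj1, hjN, hjn⟩ := hmemE j hj
      have hpm := phi_pos lam Δ m
      have hpj := phi_pos lam Δ j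
      have hpn := phi_pos lam Δ n
      have hmj : phi lam Δ m < phi lam Δ j := phi_lt lam hΔ hmono hj1 (lt_of_le_of_lt hjN hm)
      have hnum : |phi lam Δ m - phi lam Δ j| ≤ phi lam Δ j := by
        rw [abs_of_neg (by linarith)]; linarith
      rw [abs_div]
      rcases lt_or_gt_of_ne hjn with hlt | hgt
      · rw [if_neg (by omega), neg_zero, Real.exp_zero, mul_one]
        have hdj : c * phi lam Δ j ≤ |phi lam Δ n - phi lam Δ j| := by
          have h1 := den_lb lam hΔ hgap hυ hj1 hlt
          rw [← hc_def] at h1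
          have h2 : phi lam Δ n < phi lam Δ j := phi_lt lam hΔ hmono hj1 hlt
          rw [abs_sub_comm, abs_of_pos (by linarith)]
          linarith
        have hcj : 0 < c * phi lam Δ j := mul_pos hc0 hpj
        calc |phi lam Δ m - phi lam Δ j| / |phi lam Δ n - phi lam Δ j|
            ≤ phi lam Δ j / (c * phi lam Δ j) := div_le_div₀ hpj.le hnum hcj hdj
        _ = B := by rw [hB_def]; field_simp
      · rw [if_pos hgt]
        have hdec := decay lam hΔ hgap hn1 hgt
        have hrw : -(Δ*υ) * ((j:ℝ)^2 - (n:ℝ)^2) = -(Δ*υ*((j:ℝ)^2-(n:ℝ)^2)) := by ring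
        rw [hrw] at hdec
        calc |phi lam Δ m - phi lam Δ j| / |phi lam Δ n - phi lam Δ j|
            ≤ (phi lam Δ n * Real.exp (-(Δ*υ*((j:ℝ)^2-(n:ℝ)^2)))) / (c * phi lam Δ n) := by
              apply div_le_div₀ (by positivity) (hnum.trans hdec) hcφ (hden j hj)
        _ = B * Real.exp (-(Δ*υ*((j:ℝ)^2-(n:ℝ)^2))) := by
              rw [hB_def]; field_simp
    have hsum : 2*X ≤ ∑ j ∈ E, (if n < j then Δ*υ*((j:ℝ)^2-(n:ℝ)^2) else 0) := by
      obtain ⟨M, hM_def⟩ : ∃ M : ℕ, M = ⌊θ * (N₁:ℝ)⌋₊ := ⟨_, rfl⟩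
      have hMle : (M:ℝ) ≤ θ * N₁ := by
        rw [hM_def]; exact Nat.floor_le (mul_nonneg hθ0.le hN₁0)
      have hMN : M ≤ N₁ := by
        have h2 : (M:ℝ) ≤ (N₁:ℝ) := le_trans hMle (by
          have := mul_le_mul_of_nonneg_right hθ1.le hN₁0; linarith)
        exact_mod_cast h2
      have hnM : n ≤ M := by
        rw [hM_def]
        refine Nat.le_floor ?_
        have := mul_le_mul_of_nonneg_right hηθ.le hN₁0
        linarith
      have hsub : Finset.Ioc M N₁ ⊆ E := by
        intro j hj
        rw [Finset.mem_Ioc] at hj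
        rw [hE_def, Finset.mem_erase, Finset.mem_Icc]
        exact ⟨by omega, by omega, by omega⟩
      have hT : ∑ j ∈ Finset.Ioc M N₁, (if n < j then Δ*υ*((j:ℝ)^2-(n:ℝ)^2) else 0)
          ≤ ∑ j ∈ E, (if n < j then Δ*υ*((j:ℝ)^2-(n:ℝ)^2) else 0) :=
        Finset.sum_le_sum_of_subset_of_nonneg hsub (fun j _ _ => hg j)
      have hlow : ∀ j ∈ Finset.Ioc M N₁,
          Δ*υ*((θ^2-η^2)*(N₁:ℝ)^2) ≤ (if n < j then Δ*υ*((j:ℝ)^2-(n:ℝ)^2) else 0) := by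
        intro j hj
        rw [Finset.mem_Ioc] at hj
        have hnj : n < j := lt_of_le_of_lt hnM hj.1
        rw [if_pos hnj]
        have hjθ : θ * N₁ < (j:ℝ) := by
          have ha : θ * (N₁:ℝ) < M + 1 := by rw [hM_def]; exact Nat.lt_floor_add_one _
          have hb : (M:ℝ) + 1 ≤ j := by exact_mod_cast hj.1
          linarith
        have hjN : (j:ℝ) ≤ N₁ := by exact_mod_cast hj.2
        have hn2' : (n:ℝ)^2 ≤ η^2*(N₁:ℝ)^2 := by
          have := mul_self_le_mul_self (Nat.cast_nonneg n) hnη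
          linarith [this]
        have hj2' : θ^2*(N₁:ℝ)^2 ≤ (j:ℝ)^2 := by
          have := mul_self_le_mul_self (mul_nonneg hθ0.le hN₁0) hjθ.le
          linarith [this]
        have hsub2 : (θ^2-η^2)*(N₁:ℝ)^2 ≤ (j:ℝ)^2-(n:ℝ)^2 := by linarith [hn2', hj2']
        exact mul_le_mul_of_nonneg_left hsub2 (mul_pos hΔ hυ).le
      have hkey := Finset.card_nsmul_le_sum (Finset.Ioc M N₁) _ _ hlow
      rw [nsmul_eq_mul, Nat.card_Ioc] at hkey
      rw [Nat.cast_sub hMN] at hkey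
      have hMge : (1-θ)*(N₁:ℝ) ≤ (N₁:ℝ) - M := by linarith
      have h2X : 2*X = (1-θ)*(N₁:ℝ) * (Δ*υ*((θ^2-η^2)*(N₁:ℝ)^2)) := by
        rw [hX_def, hΓ_def]; ring
      have hmono2 := mul_le_mul_of_nonneg_right hMge
        (mul_nonneg (mul_pos hΔ hυ).le (mul_nonneg hθη2.le (sq_nonneg (N₁:ℝ))))
      rw [h2X]
      calc (1-θ)*(N₁:ℝ) * (Δ*υ*((θ^2-η^2)*(N₁:ℝ)^2))
          ≤ ((N₁:ℝ) - M) * (Δ*υ*((θ^2-η^2)*(N₁:ℝ)^2)) := hmono2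
      _ ≤ _ := le_trans hkey hT
    have hcardEn : E.card ≤ N₁ := by
      rw [hE_def]
      refine le_trans Finset.card_erase_le ?_
      rw [Nat.card_Icc]; omega
    have habsLag : |Lag lam Δ N₁ n (phi lam Δ m)|
        = ∏ j ∈ E, |(phi lam Δ m - phi lam Δ j) / (phi lam Δ n - phi lam Δ j)| := by
      unfold Lag; rw [← hE_def, Finset.abs_prod]
    rw [habsLag]
    calc ∏ j ∈ E, |(phi lam Δ m - phi lam Δ j) / (phi lam Δ n - phi lam Δ j)|
        ≤ ∏ j ∈ E, (B * Real.exp (-(if n < j then Δ*υ*((j:ℝ)^2-(n:ℝ)^2) else 0))) :=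
          Finset.prod_le_prod (fun j _ => abs_nonneg _) hfac
    _ = B^(E.card) * Real.exp (-∑ j ∈ E, (if n < j then Δ*υ*((j:ℝ)^2-(n:ℝ)^2) else 0)) := by
          rw [Finset.prod_mul_distrib, Finset.prod_const]
          congr 1
          rw [← Real.exp_sum]
          congr 1
          rw [Finset.sum_neg_distrib]
    _ ≤ B^N₁ * Real.exp (-(2*X)) := by
          apply mul_le_mul (pow_le_pow_right₀ hB1 hcardEn)
            (Real.exp_le_exp.mpr (by linarith)) (Real.exp_pos _).le (pow_nonneg hB0.le _)
  -- assemble the final bounds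
  obtain ⟨L, hL_def⟩ : ∃ L : ℝ, L = B^N₁ * Real.exp (-(2*X)) := ⟨_, rfl⟩
  have hL0 : 0 ≤ L := by
    rw [hL_def]; exact mul_nonneg (pow_nonneg hB0.le _) (Real.exp_pos _).le
  have he4 : Real.exp (-(2*X)) ^ 2 = Real.exp (-(4*X)) := by
    rw [sq, ← Real.exp_add]; congr 1; ring
  have hLsq : L^2 = (B^N₁)^2 * Real.exp (-(4*X)) := by
    rw [hL_def, mul_pow, he4]
  have hexpX : Real.exp (-Γ * Δ * (N₁:ℝ)^3) = Real.exp (-X) := by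
    congr 1; rw [hX_def]; ring
  have hcore : (1 + 2*(N₁:ℝ)*B) * L^2 ≤ Real.exp (-X) := by
    rw [hLsq, ← mul_assoc]
    calc (1 + 2*(N₁:ℝ)*B) * (B^N₁)^2 * Real.exp (-(4*X))
        ≤ Real.exp (3*X) * Real.exp (-(4*X)) :=
          mul_le_mul_of_nonneg_right habs (Real.exp_pos _).le
    _ = Real.exp (-X) := by rw [← Real.exp_add]; congr 1; ring
  have hN₁B : 0 ≤ (N₁:ℝ)*B := mul_nonneg hN₁0 hB0.le
  have hLcore : L^2 ≤ Real.exp (-X) := by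
    refine le_trans ?_ hcore
    have := mul_nonneg (mul_nonneg (by norm_num : (0:ℝ) ≤ 2) hN₁B) (sq_nonneg L)
    linarith [this]
  have hIcc : ∀ m ∈ Finset.Icc (N₁+1) (N₁+N₂), N₁ < m ∧ 1 ≤ m := by
    intro m hm; rw [Finset.mem_Icc] at hm; omega
  have hcard2 : ((Finset.Icc (N₁+1) (N₁+N₂)).card : ℝ) = (N₂:ℝ) := by
    rw [Nat.card_Icc]
    congr 1
    omega
  constructor
  · -- Ky bound
    have hHerm : ∀ m ∈ Finset.Icc (N₁+1) (N₁+N₂),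
        |y m * HermH lam Δ N₁ n (phi lam Δ m)| ≤ ℓ * ((1 + 2*(N₁:ℝ)*B) * L^2) := by
      intro m hm
      obtain ⟨hm1, hm2⟩ := hIcc m hm
      have hym : |y m| ≤ ℓ := (hy m hm2).2
      have hpn := phi_pos lam Δ n
      have hpm := phi_pos lam Δ m
      have hmn : phi lam Δ m < phi lam Δ n := phi_lt lam hΔ hmono hn1 (by omega)
      have hφmn : |phi lam Δ m - phi lam Δ n| ≤ phi lam Δ n := by
        rw [abs_of_neg (by linarith)]; linarith
      have hLm := hLagm m hm1
      rw [← hL_def] at hLm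
      rw [abs_mul]
      apply mul_le_mul hym ?_ (abs_nonneg _) hℓ0.le
      unfold HermH
      rw [abs_mul, abs_pow]
      have h2 : |2 * (phi lam Δ m - phi lam Δ n) * LagD lam Δ N₁ n| ≤ 2*(N₁:ℝ)*B := by
        rw [abs_mul, abs_mul, abs_two]
        calc 2 * |phi lam Δ m - phi lam Δ n| * |LagD lam Δ N₁ n|
            ≤ 2 * phi lam Δ n * ((N₁:ℝ) * B / phi lam Δ n) := by
              apply mul_le_mul (by linarith) hLagD (abs_nonneg _) (by positivity)
        _ = 2*(N₁:ℝ)*B := by field_simp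
      have h1 : |1 - 2 * (phi lam Δ m - phi lam Δ n) * LagD lam Δ N₁ n| ≤ 1 + 2*(N₁:ℝ)*B := by
        calc |1 - 2 * (phi lam Δ m - phi lam Δ n) * LagD lam Δ N₁ n|
            = |1 + -(2 * (phi lam Δ m - phi lam Δ n) * LagD lam Δ N₁ n)| := by ring_nf
        _ ≤ |1| + |-(2 * (phi lam Δ m - phi lam Δ n) * LagD lam Δ N₁ n)| := abs_add_le _ _
        _ = 1 + |2 * (phi lam Δ m - phi lam Δ n) * LagD lam Δ N₁ n| := by
              rw [abs_one, abs_neg]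
        _ ≤ 1 + 2*(N₁:ℝ)*B := by linarith
      exact mul_le_mul h1 (pow_le_pow_left₀ (abs_nonneg _) hLm 2)
        (pow_nonneg (abs_nonneg _) 2) (by linarith)
    have hKy : |Ky lam y Δ N₁ N₂ n| ≤ (N₂:ℝ) * (ℓ * ((1 + 2*(N₁:ℝ)*B) * L^2)) := by
      unfold Ky
      calc |∑ m ∈ Finset.Icc (N₁+1) (N₁+N₂), y m * HermH lam Δ N₁ n (phi lam Δ m)|
          ≤ ∑ m ∈ Finset.Icc (N₁+1) (N₁+N₂), |y m * HermH lam Δ N₁ n (phi lam Δ m)| :=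
            Finset.abs_sum_le_sum_abs _ _
      _ ≤ ∑ _m ∈ Finset.Icc (N₁+1) (N₁+N₂), ℓ * ((1 + 2*(N₁:ℝ)*B) * L^2) :=
            Finset.sum_le_sum hHerm
      _ = (N₂:ℝ) * (ℓ * ((1 + 2*(N₁:ℝ)*B) * L^2)) := by
            rw [Finset.sum_const, nsmul_eq_mul, hcard2]
    refine hKy.trans ?_
    rw [hexpX]
    calc (N₂:ℝ) * (ℓ * ((1 + 2*(N₁:ℝ)*B) * L^2))
        ≤ (N₂:ℝ) * (ℓ * Real.exp (-X)) :=
          mul_le_mul_of_nonneg_left (mul_le_mul_of_nonneg_left hcore hℓ0.le) hN₂0.le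
    _ = (N₂ * ℓ) * Real.exp (-X) := by ring
  · -- Kl bound
    unfold Kl
    rw [abs_mul, abs_neg, abs_inv]
    have hpn := phi_pos lam Δ n
    have hyn := hy n hn1
    have hinv : |Δ * y n * phi lam Δ n|⁻¹ ≤ ℓ * (Δ * phi lam Δ n)⁻¹ := by
      have h0 : 0 < Δ * ℓ⁻¹ * phi lam Δ n := by positivity
      have h1 : Δ * ℓ⁻¹ * phi lam Δ n ≤ |Δ * y n * phi lam Δ n| := by
        rw [abs_mul, abs_mul, abs_of_pos hΔ, abs_of_pos hpn]
        have h2 := hyn.1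
        have h3 := mul_le_mul_of_nonneg_right h2 (mul_pos hΔ hpn).le
        linarith [h3]
      calc |Δ * y n * phi lam Δ n|⁻¹ ≤ (Δ * ℓ⁻¹ * phi lam Δ n)⁻¹ :=
            inv_anti₀ h0 h1
      _ = ℓ * (Δ * phi lam Δ n)⁻¹ := by
            field_simp
    have hHt : ∀ m ∈ Finset.Icc (N₁+1) (N₁+N₂),
        |y m * HermHt lam Δ N₁ n (phi lam Δ m)| ≤ ℓ * (phi lam Δ n * L^2) := by
      intro m hm
      obtain ⟨hm1, hm2⟩ := hIcc m hm
      have hym : |y m| ≤ ℓ := (hy m hm2).2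
      have hpm := phi_pos lam Δ m
      have hmn : phi lam Δ m < phi lam Δ n := phi_lt lam hΔ hmono hn1 (by omega)
      have hφmn : |phi lam Δ m - phi lam Δ n| ≤ phi lam Δ n := by
        rw [abs_of_neg (by linarith)]; linarith
      have hLm := hLagm m hm1
      rw [← hL_def] at hLm
      rw [abs_mul]
      apply mul_le_mul hym ?_ (abs_nonneg _) hℓ0.le
      unfold HermHt
      rw [abs_mul, abs_pow]
      exact mul_le_mul hφmn (pow_le_pow_left₀ (abs_nonneg _) hLm 2)
        (pow_nonneg (abs_nonneg _) 2) hpn.le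
    have hsum2 : |∑ m ∈ Finset.Icc (N₁+1) (N₁+N₂), y m * HermHt lam Δ N₁ n (phi lam Δ m)|
        ≤ (N₂:ℝ) * (ℓ * (phi lam Δ n * L^2)) := by
      calc |∑ m ∈ Finset.Icc (N₁+1) (N₁+N₂), y m * HermHt lam Δ N₁ n (phi lam Δ m)|
          ≤ ∑ m ∈ Finset.Icc (N₁+1) (N₁+N₂), |y m * HermHt lam Δ N₁ n (phi lam Δ m)| :=
            Finset.abs_sum_le_sum_abs _ _
      _ ≤ ∑ _m ∈ Finset.Icc (N₁+1) (N₁+N₂), ℓ * (phi lam Δ n * L^2) :=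
            Finset.sum_le_sum hHt
      _ = (N₂:ℝ) * (ℓ * (phi lam Δ n * L^2)) := by
            rw [Finset.sum_const, nsmul_eq_mul, hcard2]
    calc |Δ * y n * phi lam Δ n|⁻¹
          * |∑ m ∈ Finset.Icc (N₁+1) (N₁+N₂), y m * HermHt lam Δ N₁ n (phi lam Δ m)|
        ≤ (ℓ * (Δ * phi lam Δ n)⁻¹) * ((N₂:ℝ) * (ℓ * (phi lam Δ n * L^2))) := by
          apply mul_le_mul hinv hsum2 (abs_nonneg _)
            (mul_nonneg hℓ0.le (inv_nonneg.mpr (mul_nonneg hΔ.le hpn.le)))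
    _ = N₂ * ℓ^2 / Δ * L^2 := by
          field_simp
    _ ≤ N₂ * ℓ^2 / Δ * Real.exp (-Γ * Δ * (N₁:ℝ)^3) := by
          rw [hexpX]
          apply mul_le_mul_of_nonneg_left hLcore
            (div_nonneg (mul_nonneg hN₂0.le (sq_nonneg ℓ)) hΔ.le)
end

section
/- Fix T > 0, η ∈ (0,1), and N₂ ∈ ℕ, and for each N₁ ∈ ℕ take the sampling step Δ := T/N₁. Then there exist constants γ_y > 0, γ_λ > 0, Γ > 0 and N₀ ∈ ℕ such that for every N₁ ≥ N₀ and every n ∈ {1,…,⌊η·N₁⌋}: |𝒦_y(n)| ≤ γ_y·exp(−Γ·N₁²) and |𝒦_λ(n)| ≤ γ_λ·exp(−Γ·N₁²). -/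
set_option maxHeartbeats 1000000
section Stmt4Aux
open Finset

private lemma exp_ratio_le {x u : ℝ} (hx : 0 < x) (hxu : x ≤ u) :
    1 / (1 - Real.exp (-u)) ≤ 1 + 1 / x := by
  have hu : 0 < u := lt_of_lt_of_le hx hxu
  have h1 : Real.exp (-x) < 1 := Real.exp_lt_one_iff.2 (by linarith)
  have h2 : Real.exp (-x) * (x + 1) ≤ 1 := by
    have h3 := Real.add_one_le_exp x
    have h4 : Real.exp (-x) * (x + 1) ≤ Real.exp (-x) * Real.exp x := by
      have := (Real.exp_pos (-x)).le
      nlinarith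
    rwa [← Real.exp_add, neg_add_cancel, Real.exp_zero] at h4
  have hmon : Real.exp (-u) ≤ Real.exp (-x) := Real.exp_le_exp.2 (by linarith)
  have hp : 0 < 1 - Real.exp (-x) := by linarith
  have hp' : 0 < 1 - Real.exp (-u) := by linarith
  calc 1 / (1 - Real.exp (-u)) ≤ 1 / (1 - Real.exp (-x)) := by gcongr
    _ ≤ 1 + 1 / x := by
        rw [div_le_iff₀ hp]
        have hxne : x ≠ 0 := ne_of_gt hx
        have : (1 + 1/x) * (1 - Real.exp (-x)) - 1
            = (1 - Real.exp (-x) * (x + 1)) / x := by field_simp; ring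
        nlinarith [div_nonneg (by linarith : (0:ℝ) ≤ 1 - Real.exp (-x) * (x+1)) hx.le]

private lemma one_add_le_exp (z : ℝ) : 1 + z ≤ Real.exp z := by
  have := Real.add_one_le_exp z; linarith

private lemma sum_inv_sq (K : ℕ) : ∑ k ∈ Finset.Icc 1 K, (1:ℝ)/(k:ℝ)^2 ≤ 2 := by
  rcases Nat.eq_zero_or_pos K with h | h
  · subst h; simp
  · have main : ∀ K' : ℕ, 1 ≤ K' → ∑ k ∈ Finset.Icc 1 K', (1:ℝ)/(k:ℝ)^2 ≤ 2 - 1/(K':ℝ) := by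
      intro K' hK'
      induction K' with
      | zero => omega
      | succ K'' ih =>
        rcases Nat.eq_zero_or_pos K'' with h0 | h0
        · subst h0; norm_num
        · rw [Finset.sum_Icc_succ_top (by omega)]
          have hKR : (1:ℝ) ≤ K'' := by exact_mod_cast h0
          have := ih h0
          have hstep : (1:ℝ)/((K''+1:ℕ):ℝ)^2 ≤ 1/(K'':ℝ) - 1/((K''+1:ℕ):ℝ) := by
            push_cast
            rw [div_sub_div _ _ (by positivity) (by positivity : (K'':ℝ)+1 ≠ 0)]
            rw [div_le_div_iff₀ (by positivity) (by positivity)]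
            ring_nf
            nlinarith
          push_cast at this hstep ⊢
          linarith
    have := main K h
    have hKR : (0:ℝ) < K := by exact_mod_cast h
    have : (0:ℝ) ≤ 1/(K:ℝ) := by positivity
    linarith [main K h]

private lemma sum_sq_ge (K : ℕ) : (K:ℝ)^3/3 ≤ ∑ k ∈ Finset.Icc 1 K, ((k:ℝ))^2 := by
  induction K with
  | zero => simp
  | succ K ih =>
    rw [Finset.sum_Icc_succ_top (by omega)]
    push_cast
    push_cast at ih
    nlinarith [ih, Nat.cast_nonneg (α := ℝ) K]

private lemma phi_lt_s4 (lam : ℕ → ℝ) (Δ : ℝ) (hΔ : 0 < Δ) {i j : ℕ} (h : lam i < lam j) :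
    phi lam Δ j < phi lam Δ i := by
  unfold phi; exact Real.exp_lt_exp.2 (by nlinarith)

private lemma key_bounds (lam : ℕ → ℝ) (υ Δ : ℝ) (hυ : 0 < υ) (hΔ : 0 < Δ)
    (hgap : ∀ n m : ℕ, 1 ≤ n → n ≤ m → υ * ((m:ℝ)^2 - (n:ℝ)^2) ≤ lam m - lam n)
    (N₁ n : ℕ) (hn1 : 1 ≤ n) (hnN : n < N₁) :
    (∀ m : ℕ, N₁ < m → |Lag lam Δ N₁ n (phi lam Δ m)| ≤
      Real.exp (-((Δ*υ) * (∑ j ∈ Finset.Icc (n+1) N₁, ((j:ℝ)^2 - (n:ℝ)^2))) + 4/(Δ*υ))) ∧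
    |LagD lam Δ N₁ n| * phi lam Δ n ≤ (N₁:ℝ) + 4/(Δ*υ) := by
  set a := Δ * υ with ha_def
  have ha : 0 < a := mul_pos hΔ hυ
  set P := phi lam Δ with hP
  have hpos : ∀ k : ℕ, 0 < P k := fun k => Real.exp_pos _
  set s := (Finset.Icc 1 N₁).erase n with hs_def
  have hlam : ∀ i j : ℕ, 1 ≤ i → i < j → a * ((j:ℝ)^2 - (i:ℝ)^2) ≤ Δ * (lam j - lam i) := by
    intro i j hi hij
    have h := hgap i j hi hij.le
    have h2 := mul_le_mul_of_nonneg_left h hΔ.le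
    calc a * ((j:ℝ)^2 - (i:ℝ)^2) = Δ * (υ * ((j:ℝ)^2 - (i:ℝ)^2)) := by ring
      _ ≤ Δ * (lam j - lam i) := h2
  have hsqpos : ∀ i j : ℕ, i < j → 0 < (j:ℝ)^2 - (i:ℝ)^2 := by
    intro i j h
    have h1 : (i:ℝ) < j := by exact_mod_cast h
    have h0 : (0:ℝ) ≤ i := Nat.cast_nonneg _
    nlinarith
  have hsqle : ∀ i j : ℕ, i < j → ((j:ℝ)-(i:ℝ))^2 ≤ (j:ℝ)^2 - (i:ℝ)^2 := by
    intro i j h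
    have h1 : (i:ℝ) < j := by exact_mod_cast h
    have h0 : (0:ℝ) ≤ i := Nat.cast_nonneg _
    nlinarith
  have hltP : ∀ i j : ℕ, 1 ≤ i → i < j → P j < P i := by
    intro i j hi hij
    have h1 := hlam i j hi hij
    have h2 := hsqpos i j hij
    have h3 : 0 < Δ * (lam j - lam i) := lt_of_lt_of_le (by positivity) h1
    exact phi_lt_s4 lam Δ hΔ (by nlinarith)
  set xf : ℕ → ℝ := fun j => a * ((j:ℝ)-(n:ℝ))^2 with hxf_def
  have hxf : ∀ j ∈ s, 0 < xf j := by
    intro j hj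
    have hjn : j ≠ n := (Finset.mem_erase.1 hj).1
    have : (j:ℝ) ≠ (n:ℝ) := by exact_mod_cast hjn
    have hne : (j:ℝ)-(n:ℝ) ≠ 0 := sub_ne_zero.2 this
    exact mul_pos ha (lt_of_le_of_ne (sq_nonneg _) (Ne.symm (pow_ne_zero 2 hne)))
  have hsplitP : ∀ i j : ℕ, P j = P i * Real.exp (-(Δ*(lam j - lam i))) := by
    intro i j
    simp only [hP, phi, ← Real.exp_add]
    ring_nf
  -- xf j ≤ Δ*(lam j - lam n) resp. Δ*(lam n - lam j)
  have hxfu : ∀ j ∈ s, n < j → xf j ≤ Δ * (lam j - lam n) :=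
    fun j hj hnj => le_trans (by have := hsqle n j hnj; simp only [hxf_def]; nlinarith) (hlam n j hn1 hnj)
  have hxfv : ∀ j ∈ s, j < n → xf j ≤ Δ * (lam n - lam j) := by
    intro j hj hjn
    have hj1 : 1 ≤ j := (Finset.mem_Icc.1 (Finset.mem_of_mem_erase hj)).1
    refine le_trans ?_ (hlam j n hj1 hjn)
    have := hsqle j n hjn
    simp only [hxf_def]; nlinarith
  -- lower bound for denominators
  have hden : ∀ j ∈ s, P n * (1 - Real.exp (-(xf j))) ≤ |P n - P j| := by
    intro j hj
    have hjn : j ≠ n := (Finset.mem_erase.1 hj).1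
    have hj1 : 1 ≤ j := (Finset.mem_Icc.1 (Finset.mem_of_mem_erase hj)).1
    have hx := hxf j hj
    rcases lt_or_gt_of_ne hjn with hjln | hjgn
    · -- j < n : P j > P n, |P n - P j| = P j - P n = P j (1 - exp (-v))
      have hv := hxfv j hj hjln
      have hPj : P n = P j * Real.exp (-(Δ*(lam n - lam j))) := hsplitP j n
      have hPgt : P n < P j := hltP j n hj1 hjln
      rw [abs_of_neg (by linarith)]
      have hmon : Real.exp (-(Δ*(lam n - lam j))) ≤ Real.exp (-(xf j)) := Real.exp_le_exp.2 (by linarith)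
      have := hpos j
      have hPn : P n ≤ P j := hPgt.le
      calc P n * (1 - Real.exp (-(xf j))) ≤ P j * (1 - Real.exp (-(Δ*(lam n - lam j)))) := by
            have h1 : Real.exp (-(xf j)) < 1 := Real.exp_lt_one_iff.2 (by linarith)
            have h2 : 0 < 1 - Real.exp (-(xf j)) := by linarith
            have h3 := (Real.exp_pos (-(Δ*(lam n - lam j)))).le
            nlinarith
        _ = P j - P n := by rw [hPj]; ring
        _ = -(P n - P j) := by ring
    · -- n < j : P j < P n, P n - P j = P n (1 - exp (-u))
      have hu := hxfu j hj hjgn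
      have hPj : P j = P n * Real.exp (-(Δ*(lam j - lam n))) := hsplitP n j
      have hPlt : P j < P n := hltP n j hn1 hjgn
      rw [abs_of_pos (by linarith)]
      have hmon : Real.exp (-(Δ*(lam j - lam n))) ≤ Real.exp (-(xf j)) := Real.exp_le_exp.2 (by linarith)
      have := hpos n
      calc P n * (1 - Real.exp (-(xf j))) ≤ P n * (1 - Real.exp (-(Δ*(lam j - lam n)))) := by nlinarith
        _ = P n - P j := by rw [hPj]; ring
  -- sum of 1/xf
  have hsum_inv : ∑ j ∈ s, 1/(xf j) ≤ 4/a := by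
    have h1 : ∀ j ∈ s, 1/(xf j) = a⁻¹ * (1/((j:ℝ)-(n:ℝ))^2) := by
      intro j hj
      simp only [hxf_def]
      rw [one_div, mul_inv, ← one_div, inv_eq_one_div]
    rw [Finset.sum_congr rfl h1, ← Finset.mul_sum]
    have hsplit : s = Finset.Icc 1 (n-1) ∪ Finset.Icc (n+1) N₁ := by
      ext j
      simp only [hs_def, Finset.mem_erase, Finset.mem_Icc, Finset.mem_union]
      omega
    have hdisj : Disjoint (Finset.Icc 1 (n-1)) (Finset.Icc (n+1) N₁) := by
      rw [Finset.disjoint_left]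
      intro j h1 h2
      simp only [Finset.mem_Icc] at h1 h2
      omega
    rw [hsplit, Finset.sum_union hdisj]
    have e1 : ∑ j ∈ Finset.Icc 1 (n-1), (1:ℝ)/((j:ℝ)-(n:ℝ))^2
        = ∑ k ∈ Finset.Icc 1 (n-1), (1:ℝ)/(k:ℝ)^2 := by
      apply Finset.sum_nbij' (i := fun j => n - j) (j := fun k => n - k)
      · intro j hj; simp only [Finset.mem_Icc] at *; omega
      · intro k hk; simp only [Finset.mem_Icc] at *; omega
      · intro j hj; simp only [Finset.mem_Icc] at hj; omega
      · intro k hk; simp only [Finset.mem_Icc] at hk; omega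
      · intro j hj
        simp only [Finset.mem_Icc] at hj
        rw [Nat.cast_sub (by omega)]
        rw [show ((j:ℝ)-(n:ℝ))^2 = ((n:ℝ)-(j:ℝ))^2 by ring]
    have e2 : ∑ j ∈ Finset.Icc (n+1) N₁, (1:ℝ)/((j:ℝ)-(n:ℝ))^2
        = ∑ k ∈ Finset.Icc 1 (N₁-n), (1:ℝ)/(k:ℝ)^2 := by
      apply Finset.sum_nbij' (i := fun j => j - n) (j := fun k => k + n)
      · intro j hj; simp only [Finset.mem_Icc] at *; omega
      · intro k hk; simp only [Finset.mem_Icc] at *; omega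
      · intro j hj; simp only [Finset.mem_Icc] at hj; omega
      · intro k hk; simp only [Finset.mem_Icc] at hk; omega
      · intro j hj
        simp only [Finset.mem_Icc] at hj
        rw [Nat.cast_sub (by omega)]
    rw [e1, e2]
    have := sum_inv_sq (n-1)
    have := sum_inv_sq (N₁-n)
    have h4 : a⁻¹ * (∑ k ∈ Finset.Icc 1 (n-1), (1:ℝ)/(k:ℝ)^2 + ∑ k ∈ Finset.Icc 1 (N₁-n), (1:ℝ)/(k:ℝ)^2) ≤ a⁻¹ * 4 := by
      gcongr
      linarith
    calc _ ≤ a⁻¹ * 4 := h4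
      _ = 4 / a := by rw [inv_eq_one_div]; ring
  constructor
  · -- Lagrange bound
    intro m hm
    have hfac : ∀ j ∈ s, |(P m - P j)/(P n - P j)| ≤
        Real.exp (-(if n < j then a*((j:ℝ)^2-(n:ℝ)^2) else 0) + 1/(xf j)) := by
      intro j hj
      have hjn : j ≠ n := (Finset.mem_erase.1 hj).1
      have hjIcc := Finset.mem_Icc.1 (Finset.mem_of_mem_erase hj)
      have hj1 : 1 ≤ j := hjIcc.1
      have hPmj : P m < P j := hltP j m hj1 (lt_of_le_of_lt hjIcc.2 hm)
      have hPm := hpos m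
      have hnum : |P m - P j| ≤ P j := by
        rw [abs_of_neg (by linarith)]; linarith
      have hx := hxf j hj
      rw [abs_div]
      rcases lt_or_gt_of_ne hjn with hjln | hjgn
      · -- j < n: factor ≤ 1/(1 - exp(-v)) ≤ 1 + 1/xf ≤ exp (1/xf)
        have hv := hxfv j hj hjln
        have hPj : P n = P j * Real.exp (-(Δ*(lam n - lam j))) := hsplitP j n
        have hPgt : P n < P j := hltP j n hj1 hjln
        have habs : |P n - P j| = P j * (1 - Real.exp (-(Δ*(lam n - lam j)))) := by
          rw [abs_of_neg (by linarith), hPj]; ring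
        have hvpos : 0 < Δ*(lam n - lam j) := lt_of_lt_of_le hx hv
        have hepos : 0 < 1 - Real.exp (-(Δ*(lam n - lam j))) := by
          have := Real.exp_lt_one_iff.2 (show -(Δ*(lam n - lam j)) < 0 by linarith)
          linarith
        have hdpos : 0 < P j * (1 - Real.exp (-(Δ*(lam n - lam j)))) := by
          have := hpos j; positivity
        rw [habs, if_neg (by omega)]
        calc |P m - P j| / (P j * (1 - Real.exp (-(Δ*(lam n - lam j)))))
            ≤ P j / (P j * (1 - Real.exp (-(Δ*(lam n - lam j))))) := by gcongr
          _ = 1 / (1 - Real.exp (-(Δ*(lam n - lam j)))) := by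
              rw [← div_div, div_self (ne_of_gt (hpos j))]
          _ ≤ 1 + 1/(xf j) := exp_ratio_le hx hv
          _ ≤ Real.exp (1/(xf j)) := one_add_le_exp _
          _ = Real.exp (-0 + 1/(xf j)) := by norm_num
      · -- n < j
        have hu := hxfu j hj hjgn
        have hPj : P j = P n * Real.exp (-(Δ*(lam j - lam n))) := hsplitP n j
        have hPlt : P j < P n := hltP n j hn1 hjgn
        have habs : |P n - P j| = P n * (1 - Real.exp (-(Δ*(lam j - lam n)))) := by
          rw [abs_of_pos (by linarith), hPj]; ring
        have hupos : 0 < Δ*(lam j - lam n) := lt_of_lt_of_le hx hu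
        have hx2u : a*((j:ℝ)^2-(n:ℝ)^2) ≤ Δ*(lam j - lam n) := hlam n j hn1 hjgn
        have hepos : 0 < 1 - Real.exp (-(Δ*(lam j - lam n))) := by
          have := Real.exp_lt_one_iff.2 (show -(Δ*(lam j - lam n)) < 0 by linarith)
          linarith
        rw [habs, if_pos hjgn]
        calc |P m - P j| / (P n * (1 - Real.exp (-(Δ*(lam j - lam n)))))
            ≤ P j / (P n * (1 - Real.exp (-(Δ*(lam j - lam n))))) := by
              gcongr
              exact (mul_pos (hpos n) hepos).le
          _ = Real.exp (-(Δ*(lam j - lam n))) / (1 - Real.exp (-(Δ*(lam j - lam n)))) := by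
              rw [hPj, mul_div_mul_left _ _ (ne_of_gt (hpos n))]
          _ = Real.exp (-(Δ*(lam j - lam n))) * (1 / (1 - Real.exp (-(Δ*(lam j - lam n))))) := by
              ring
          _ ≤ Real.exp (-(a*((j:ℝ)^2-(n:ℝ)^2))) * (1 + 1/(xf j)) := by
              apply mul_le_mul (Real.exp_le_exp.2 (by linarith)) (exp_ratio_le hx hu)
                (le_of_lt (by positivity)) (Real.exp_pos _).le
          _ ≤ Real.exp (-(a*((j:ℝ)^2-(n:ℝ)^2))) * Real.exp (1/(xf j)) := by
              apply mul_le_mul_of_nonneg_left (one_add_le_exp _) (Real.exp_pos _).le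
          _ = Real.exp (-(a*((j:ℝ)^2-(n:ℝ)^2)) + 1/(xf j)) := (Real.exp_add _ _).symm
    have hLag1 : |Lag lam Δ N₁ n (P m)| ≤
        Real.exp (∑ j ∈ s, (-(if n < j then a*((j:ℝ)^2-(n:ℝ)^2) else 0) + 1/(xf j))) := by
      rw [Lag, Finset.abs_prod, Real.exp_sum]
      exact Finset.prod_le_prod (fun j _ => abs_nonneg _) hfac
    refine le_trans hLag1 (Real.exp_le_exp.2 ?_)
    rw [Finset.sum_add_distrib, Finset.sum_neg_distrib]
    have hite : ∑ j ∈ s, (if n < j then a*((j:ℝ)^2-(n:ℝ)^2) else 0)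
        = a * ∑ j ∈ Finset.Icc (n+1) N₁, ((j:ℝ)^2-(n:ℝ)^2) := by
      rw [← Finset.sum_filter, Finset.mul_sum]
      apply Finset.sum_congr
      · ext j
        simp only [Finset.mem_filter, hs_def, Finset.mem_erase, Finset.mem_Icc]
        omega
      · intro j _; rfl
    rw [hite]
    linarith [hsum_inv]
  · -- LagD bound
    have h1 : |LagD lam Δ N₁ n| ≤ ∑ j ∈ s, |1/(P n - P j)| := by
      rw [LagD]
      exact Finset.abs_sum_le_sum_abs _ _
    have h2 : ∀ j ∈ s, |1/(P n - P j)| * P n ≤ 1 + 1/(xf j) := by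
      intro j hj
      have hx := hxf j hj
      have hdj := hden j hj
      have hjn : j ≠ n := (Finset.mem_erase.1 hj).1
      have hPddpos : 0 < |P n - P j| := by
        rcases lt_or_gt_of_ne hjn with h | h
        · have := hltP j n ((Finset.mem_Icc.1 (Finset.mem_of_mem_erase hj)).1) h
          rw [abs_of_neg (by linarith)]; linarith
        · have := hltP n j hn1 h
          rw [abs_of_pos (by linarith)]; linarith
      have hexp : 0 < 1 - Real.exp (-(xf j)) := by
        have := Real.exp_lt_one_iff.2 (show -(xf j) < 0 by linarith)
        linarith
      have hPn := hpos n
      rw [abs_div, abs_one]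
      rw [div_mul_eq_mul_div, div_le_iff₀ hPddpos]
      calc 1 * P n = P n * (1 - Real.exp (-(xf j))) * (1/(1 - Real.exp (-(xf j)))) := by
            field_simp
        _ ≤ P n * (1 - Real.exp (-(xf j))) * (1 + 1/(xf j)) := by
            exact mul_le_mul_of_nonneg_left (exp_ratio_le hx le_rfl) (mul_pos hPn hexp).le
        _ ≤ |P n - P j| * (1 + 1/(xf j)) := by
            have h7 : (0:ℝ) ≤ 1 + 1/(xf j) := by positivity
            exact mul_le_mul_of_nonneg_right hdj h7
        _ = (1 + 1/(xf j)) * |P n - P j| := by ring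
    have h3 : |LagD lam Δ N₁ n| * P n ≤ ∑ j ∈ s, (1 + 1/(xf j)) := by
      calc |LagD lam Δ N₁ n| * P n ≤ (∑ j ∈ s, |1/(P n - P j)|) * P n := by
            gcongr
            exact (hpos n).le
        _ = ∑ j ∈ s, |1/(P n - P j)| * P n := by rw [Finset.sum_mul]
        _ ≤ ∑ j ∈ s, (1 + 1/(xf j)) := Finset.sum_le_sum h2
    refine le_trans h3 ?_
    rw [Finset.sum_add_distrib, Finset.sum_const]
    have hcard : (s.card : ℝ) ≤ (N₁ : ℝ) := by
      have : s.card ≤ (Finset.Icc 1 N₁).card := Finset.card_le_card (Finset.erase_subset _ _)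
      rw [Nat.card_Icc] at this
      exact_mod_cast le_trans this (by omega)
    have := hsum_inv
    simp only [nsmul_eq_mul, mul_one]
    linarith

theorem stmt4 (lam y : ℕ → ℝ) (υ Υ ℓ T η : ℝ) (N₂ : ℕ)
    (hυ : 0 < υ) (hυΥ : υ ≤ Υ)
    (hmono : ∀ n m : ℕ, 1 ≤ n → n < m → lam n < lam m)
    (hgap : ∀ n m : ℕ, 1 ≤ n → n ≤ m →
      υ * ((m : ℝ) ^ 2 - (n : ℝ) ^ 2) ≤ lam m - lam n ∧
      lam m - lam n ≤ Υ * ((m : ℝ) ^ 2 - (n : ℝ) ^ 2))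
    (hℓ : 1 < ℓ) (hy : ∀ n : ℕ, 1 ≤ n → ℓ⁻¹ ≤ |y n| ∧ |y n| ≤ ℓ)
    (hT : 0 < T) (hη : 0 < η) (hη1 : η < 1) (hN₂ : 1 ≤ N₂) :
    ∃ γy γl Γ : ℝ, 0 < γy ∧ 0 < γl ∧ 0 < Γ ∧
      ∃ N₀ : ℕ, ∀ N₁ : ℕ, N₀ ≤ N₁ →
        ∀ n : ℕ, 1 ≤ n → n ≤ ⌊η * (N₁ : ℝ)⌋₊ →
          |Ky lam y (T / (N₁ : ℝ)) N₁ N₂ n| ≤ γy * Real.exp (-Γ * (N₁ : ℝ) ^ 2) ∧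
          |Kl lam y (T / (N₁ : ℝ)) N₁ N₂ n| ≤ γl * Real.exp (-Γ * (N₁ : ℝ) ^ 2) := by
  have hη' : 0 < 1 - η := by linarith
  have hℓ0 : 0 < ℓ := by linarith
  have hN₂R : (0:ℝ) < N₂ := by exact_mod_cast hN₂
  set c := T*υ*(1-η)^3/3 with hc_def
  have hc : 0 < c := by positivity
  set K := 2 + 16/(T*υ) with hK_def
  have hKpos : 0 < K := by positivity
  set γ := (N₂:ℝ)*ℓ^2*(1+1/T) with hγ_def
  have hγ : 0 < γ := by positivity
  clear_value c K γ
  refine ⟨γ, γ, c, hγ, hγ, hc, max 1 ⌈K/c⌉₊, ?_⟩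
  intro N₁ hN₀ n hn1 hnfloor
  have hN11 : 1 ≤ N₁ := le_trans (le_max_left _ _) hN₀
  have hN1R : (1:ℝ) ≤ (N₁:ℝ) := by exact_mod_cast hN11
  have hN1pos : (0:ℝ) < N₁ := by linarith
  have hKc : K ≤ c * N₁ := by
    have h1 : (⌈K/c⌉₊ : ℝ) ≤ (N₁:ℝ) := by
      exact_mod_cast le_trans (le_max_right 1 ⌈K/c⌉₊) hN₀
    have h2 : K/c ≤ (N₁:ℝ) := le_trans (Nat.le_ceil _) h1
    calc K = c * (K/c) := by field_simp
      _ ≤ c * N₁ := by gcongr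
  set Δ := T / (N₁:ℝ) with hΔ_def
  have hΔ : 0 < Δ := div_pos hT hN1pos
  have hnle : (n:ℝ) ≤ η * N₁ :=
    le_trans (by exact_mod_cast hnfloor) (Nat.floor_le (by positivity))
  have hnN : n < N₁ := by
    have h1 : (n:ℝ) < (N₁:ℝ) := lt_of_le_of_lt hnle (by nlinarith)
    exact_mod_cast h1
  obtain ⟨hLag, hD⟩ := key_bounds lam υ Δ hυ hΔ (fun i j hi hij => (hgap i j hi hij).1)
    N₁ n hn1 hnN
  set a := Δ * υ with ha_def
  have ha : 0 < a := mul_pos hΔ hυ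
  set Sq := ∑ j ∈ Finset.Icc (n+1) N₁, ((j:ℝ)^2 - (n:ℝ)^2) with hSq_def
  set P := phi lam Δ with hP_def
  have hpos : ∀ k : ℕ, 0 < P k := fun k => Real.exp_pos _
  -- lower bound on a * Sq
  have hSqlow : c * (N₁:ℝ)^2 ≤ a * Sq := by
    have step1 : ∑ j ∈ Finset.Icc (n+1) N₁, ((j:ℝ)-(n:ℝ))^2 ≤ Sq := by
      apply Finset.sum_le_sum
      intro j hj
      have hj1 : n + 1 ≤ j := (Finset.mem_Icc.1 hj).1
      have : (n:ℝ) < j := by exact_mod_cast hj1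
      have h0 : (0:ℝ) ≤ n := Nat.cast_nonneg _
      nlinarith
    have step2 : ∑ j ∈ Finset.Icc (n+1) N₁, ((j:ℝ)-(n:ℝ))^2
        = ∑ k ∈ Finset.Icc 1 (N₁-n), ((k:ℝ))^2 := by
      apply Finset.sum_nbij' (i := fun j => j - n) (j := fun k => k + n)
      · intro j hj; simp only [Finset.mem_Icc] at *; omega
      · intro k hk; simp only [Finset.mem_Icc] at *; omega
      · intro j hj; simp only [Finset.mem_Icc] at hj; omega
      · intro k hk; simp only [Finset.mem_Icc] at hk; omega
      · intro j hj
        simp only [Finset.mem_Icc] at hj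
        rw [Nat.cast_sub (by omega)]
    have step3 := sum_sq_ge (N₁ - n)
    have step4 : ((N₁-n:ℕ):ℝ) = (N₁:ℝ) - n := by
      rw [Nat.cast_sub hnN.le]
    have step5 : (1-η) * N₁ ≤ (N₁:ℝ) - n := by nlinarith
    have step6 : ((1-η)*(N₁:ℝ))^3 ≤ ((N₁:ℝ)-(n:ℝ))^3 := by
      apply pow_le_pow_left₀ (by positivity) step5
    have hSqge : ((1-η)*(N₁:ℝ))^3/3 ≤ Sq := by
      rw [step4] at step3
      rw [step2] at step1
      linarith
    have heq : a * (((1-η)*(N₁:ℝ))^3/3) = c * (N₁:ℝ)^2 := by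
      have hN1ne : (N₁:ℝ) ≠ 0 := ne_of_gt hN1pos
      rw [ha_def, hΔ_def, hc_def]
      field_simp
    calc c * (N₁:ℝ)^2 = a * (((1-η)*(N₁:ℝ))^3/3) := heq.symm
      _ ≤ a * Sq := by gcongr
  have h4a : 4/a = 4*(N₁:ℝ)/(T*υ) := by
    rw [ha_def, hΔ_def]
    field_simp
  clear_value Δ a Sq P
  -- m-dependent facts
  have hmem : ∀ m ∈ Finset.Icc (N₁+1) (N₁+N₂), N₁ < m ∧ 1 ≤ m := by
    intro m hm
    have := Finset.mem_Icc.1 hm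
    omega
  have hPmn : ∀ m ∈ Finset.Icc (N₁+1) (N₁+N₂), |P m - P n| ≤ P n := by
    intro m hm
    obtain ⟨hm1, _⟩ := hmem m hm
    have hlam : lam n < lam m := by
      have h := (hgap n m hn1 (by omega)).1
      have h2 : (n:ℝ) < m := by exact_mod_cast lt_trans hnN hm1
      have h0 : (0:ℝ) ≤ n := Nat.cast_nonneg _
      have hsq : (0:ℝ) < (m:ℝ)^2-(n:ℝ)^2 := by nlinarith
      have := mul_pos hυ hsq
      linarith
    have := phi_lt_s4 lam Δ hΔ hlam
    have := hpos m
    rw [abs_of_neg (by simp only [hP_def] at *; linarith)]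
    simp only [hP_def] at *
    linarith
  set E := Real.exp (-(a * Sq) + 4/a) with hE_def
  have hEpos : 0 < E := Real.exp_pos _
  have hE2 : E^2 = Real.exp (2*(-(a*Sq) + 4/a)) := by
    rw [hE_def, sq, ← Real.exp_add]; ring_nf
  clear_value E
  -- card
  have hcard : (Finset.Icc (N₁+1) (N₁+N₂)).card = N₂ := by
    rw [Nat.card_Icc]; omega
  have hyb : ∀ m ∈ Finset.Icc (N₁+1) (N₁+N₂), |y m| ≤ ℓ := by
    intro m hm
    have := Finset.mem_Icc.1 hm
    exact (hy m (by omega)).2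
  constructor
  · -- Ky bound
    have hH : ∀ m ∈ Finset.Icc (N₁+1) (N₁+N₂),
        |HermH lam Δ N₁ n (P m)| ≤ (1 + 2*((N₁:ℝ) + 4/a)) * E^2 := by
      intro m hm
      obtain ⟨hm1, _⟩ := hmem m hm
      rw [HermH]
      simp only [← hP_def]
      rw [abs_mul]
      have hL := hLag m hm1
      have h1 : |(Lag lam Δ N₁ n (P m))^2| ≤ E^2 := by
        rw [abs_pow]
        exact pow_le_pow_left₀ (abs_nonneg _) hL 2
      have h2 : |1 - 2*(P m - P n)*LagD lam Δ N₁ n| ≤ 1 + 2*((N₁:ℝ) + 4/a) := by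
        have h3 : |2*(P m - P n)*LagD lam Δ N₁ n| = 2*(|P m - P n| * |LagD lam Δ N₁ n|) := by
          rw [abs_mul, abs_mul, abs_two]; ring
        have h4 := hPmn m hm
        have h5 : |P m - P n| * |LagD lam Δ N₁ n| ≤ P n * |LagD lam Δ N₁ n| :=
          mul_le_mul_of_nonneg_right h4 (abs_nonneg _)
        have h6 : P n * |LagD lam Δ N₁ n| ≤ (N₁:ℝ) + 4/a := by rw [mul_comm]; exact hD
        calc |1 - 2*(P m - P n)*LagD lam Δ N₁ n|
            ≤ |(1:ℝ)| + |2*(P m - P n)*LagD lam Δ N₁ n| := abs_sub _ _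
          _ = 1 + 2*(|P m - P n| * |LagD lam Δ N₁ n|) := by rw [h3, abs_one]
          _ ≤ 1 + 2*((N₁:ℝ) + 4/a) := by linarith
      exact mul_le_mul h2 h1 (abs_nonneg _) (by positivity)
    have hKy1 : |Ky lam y Δ N₁ N₂ n| ≤ (N₂:ℝ) * (ℓ * ((1 + 2*((N₁:ℝ) + 4/a)) * E^2)) := by
      rw [Ky]
      simp only [← hP_def]
      calc |∑ m ∈ Finset.Icc (N₁+1) (N₁+N₂), y m * HermH lam Δ N₁ n (P m)|
          ≤ ∑ m ∈ Finset.Icc (N₁+1) (N₁+N₂), |y m * HermH lam Δ N₁ n (P m)| :=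
            Finset.abs_sum_le_sum_abs _ _
        _ ≤ ∑ m ∈ Finset.Icc (N₁+1) (N₁+N₂), ℓ * ((1 + 2*((N₁:ℝ) + 4/a)) * E^2) := by
            apply Finset.sum_le_sum
            intro m hm
            rw [abs_mul]
            apply mul_le_mul (hyb m hm) (hH m hm) (abs_nonneg _) hℓ0.le
        _ = (N₂:ℝ) * (ℓ * ((1 + 2*((N₁:ℝ) + 4/a)) * E^2)) := by
            rw [Finset.sum_const, hcard, nsmul_eq_mul]
    have hpre : 1 + 2*((N₁:ℝ) + 4/a) ≤ Real.exp ((2 + 8/(T*υ)) * N₁) := by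
      have : 2*((N₁:ℝ) + 4/a) = (2 + 8/(T*υ)) * N₁ := by
        rw [h4a]; field_simp; ring
      rw [this]
      exact one_add_le_exp _
    have hfinal : (N₂:ℝ) * (ℓ * ((1 + 2*((N₁:ℝ) + 4/a)) * E^2))
        ≤ γ * Real.exp (-c * (N₁:ℝ)^2) := by
      have hexp : Real.exp ((2 + 8/(T*υ)) * N₁) * E^2 ≤ Real.exp (-c * (N₁:ℝ)^2) := by
        rw [hE2, ← Real.exp_add]
        apply Real.exp_le_exp.2
        rw [h4a]
        have hKN : K * (N₁:ℝ) ≤ c * (N₁:ℝ)^2 := by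
          have h20 := mul_le_mul_of_nonneg_right hKc hN1pos.le
          calc K * (N₁:ℝ) ≤ c * (N₁:ℝ) * (N₁:ℝ) := h20
            _ = c * (N₁:ℝ)^2 := by ring
        have heq3 : (2 + 8/(T*υ)) * (N₁:ℝ) + 2 * (4*(N₁:ℝ)/(T*υ)) = K * N₁ := by
          rw [hK_def]; field_simp; ring
        nlinarith [hSqlow, hKN, heq3]
      have hγ1 : (N₂:ℝ) * ℓ ≤ γ := by
        rw [hγ_def]
        have h1 : ℓ ≤ ℓ^2*(1+1/T) := by nlinarith [one_div_pos.2 hT]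
        nlinarith
      calc (N₂:ℝ) * (ℓ * ((1 + 2*((N₁:ℝ) + 4/a)) * E^2))
          ≤ (N₂:ℝ) * (ℓ * (Real.exp ((2 + 8/(T*υ)) * N₁) * E^2)) := by
            gcongr
          _ = ((N₂:ℝ) * ℓ) * (Real.exp ((2 + 8/(T*υ)) * N₁) * E^2) := by ring
          _ ≤ γ * Real.exp (-c * (N₁:ℝ)^2) := by
            apply mul_le_mul hγ1 hexp (by positivity) hγ.le
    exact le_trans hKy1 hfinal
  · -- Kl bound
    have hyn : ℓ⁻¹ ≤ |y n| := (hy n hn1).1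
    have hynpos : 0 < |y n| := lt_of_lt_of_le (by positivity) hyn
    have hHt : ∀ m ∈ Finset.Icc (N₁+1) (N₁+N₂),
        |HermHt lam Δ N₁ n (P m)| ≤ P n * E^2 := by
      intro m hm
      obtain ⟨hm1, _⟩ := hmem m hm
      rw [HermHt]
      simp only [← hP_def]
      rw [abs_mul]
      have h1 : |(Lag lam Δ N₁ n (P m))^2| ≤ E^2 := by
        rw [abs_pow]
        exact pow_le_pow_left₀ (abs_nonneg _) (hLag m hm1) 2
      apply mul_le_mul (hPmn m hm) h1 (abs_nonneg _) (hpos n).le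
    have hKl1 : |Kl lam y Δ N₁ N₂ n| ≤ (Δ * |y n| * P n)⁻¹ * ((N₂:ℝ) * (ℓ * (P n * E^2))) := by
      rw [Kl]
      simp only [← hP_def]
      rw [abs_mul, abs_neg, abs_inv, abs_mul, abs_mul, abs_of_pos hΔ, abs_of_pos (hpos n)]
      have hinv0 : (0:ℝ) ≤ (Δ * |y n| * P n)⁻¹ :=
        inv_nonneg.2 (mul_nonneg (mul_nonneg hΔ.le (abs_nonneg _)) (hpos n).le)
      apply mul_le_mul_of_nonneg_left ?_ hinv0
      calc |∑ m ∈ Finset.Icc (N₁+1) (N₁+N₂), y m * HermHt lam Δ N₁ n (P m)|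
          ≤ ∑ m ∈ Finset.Icc (N₁+1) (N₁+N₂), |y m * HermHt lam Δ N₁ n (P m)| :=
            Finset.abs_sum_le_sum_abs _ _
        _ ≤ ∑ m ∈ Finset.Icc (N₁+1) (N₁+N₂), ℓ * (P n * E^2) := by
            apply Finset.sum_le_sum
            intro m hm
            rw [abs_mul]
            apply mul_le_mul (hyb m hm) (hHt m hm) (abs_nonneg _) hℓ0.le
        _ = (N₂:ℝ) * (ℓ * (P n * E^2)) := by
            rw [Finset.sum_const, hcard, nsmul_eq_mul]
    have heq2 : (Δ * |y n| * P n)⁻¹ * ((N₂:ℝ) * (ℓ * (P n * E^2)))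
        = (N₂:ℝ) * ℓ * E^2 * ((1/Δ) * (1/|y n|)) := by
      have hPne : P n ≠ 0 := ne_of_gt (hpos n)
      have hΔne : Δ ≠ 0 := ne_of_gt hΔ
      have hyne : |y n| ≠ 0 := ne_of_gt hynpos
      field_simp
    have hyinv : 1/|y n| ≤ ℓ := by
      rw [div_le_iff₀ hynpos]
      calc 1 = ℓ * ℓ⁻¹ := (mul_inv_cancel₀ (ne_of_gt hℓ0)).symm
        _ ≤ ℓ * |y n| := by gcongr
    have hΔinv : 1/Δ = (N₁:ℝ)/T := by
      rw [hΔ_def, one_div_div]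
    have hfinal : (N₂:ℝ) * ℓ * E^2 * ((1/Δ) * (1/|y n|)) ≤ γ * Real.exp (-c * (N₁:ℝ)^2) := by
      have h1 : (1/Δ) * (1/|y n|) ≤ ((N₁:ℝ)/T) * ℓ := by
        rw [hΔinv]
        apply mul_le_mul le_rfl hyinv (by positivity) (by positivity)
      have hN1exp : (N₁:ℝ) ≤ Real.exp (N₁:ℝ) := by
        have := one_add_le_exp ((N₁:ℝ))
        linarith
      have hexp : Real.exp ((N₁:ℝ)) * E^2 ≤ Real.exp (-c * (N₁:ℝ)^2) := by
        rw [hE2, ← Real.exp_add]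
        apply Real.exp_le_exp.2
        rw [h4a]
        have hKN : K * (N₁:ℝ) ≤ c * (N₁:ℝ)^2 := by
          have h20 := mul_le_mul_of_nonneg_right hKc hN1pos.le
          calc K * (N₁:ℝ) ≤ c * (N₁:ℝ) * (N₁:ℝ) := h20
            _ = c * (N₁:ℝ)^2 := by ring
        have h11 : (0:ℝ) ≤ 8*(N₁:ℝ)/(T*υ) := by positivity
        have h9 : (N₁:ℝ) + 2*(4*(N₁:ℝ)/(T*υ)) ≤ K * N₁ := by
          have h10 : K * (N₁:ℝ) = ((N₁:ℝ) + 2*(4*(N₁:ℝ)/(T*υ))) + ((N₁:ℝ) + 8*(N₁:ℝ)/(T*υ)) := by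
            rw [hK_def]; ring
          linarith
        linarith [hSqlow]
      have hγ2 : (N₂:ℝ) * ℓ * ℓ / T ≤ γ := by
        rw [hγ_def]
        have h21 : (N₂:ℝ) * ℓ * ℓ / T = (N₂:ℝ)*ℓ^2*(1/T) := by ring
        rw [h21]
        apply mul_le_mul_of_nonneg_left (by linarith [one_div_pos.2 hT]) (by positivity)
      calc (N₂:ℝ) * ℓ * E^2 * ((1/Δ) * (1/|y n|))
          ≤ (N₂:ℝ) * ℓ * E^2 * (((N₁:ℝ)/T) * ℓ) := by gcongr
        _ = ((N₂:ℝ) * ℓ * ℓ / T) * ((N₁:ℝ) * E^2) := by ring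
        _ ≤ ((N₂:ℝ) * ℓ * ℓ / T) * (Real.exp ((N₁:ℝ)) * E^2) := by
            gcongr
        _ ≤ γ * Real.exp (-c * (N₁:ℝ)^2) := by
            apply mul_le_mul hγ2 hexp (by positivity) hγ.le
    calc |Kl lam y Δ N₁ N₂ n| ≤ (Δ * |y n| * P n)⁻¹ * ((N₂:ℝ) * (ℓ * (P n * E^2))) := hKl1
      _ = (N₂:ℝ) * ℓ * E^2 * ((1/Δ) * (1/|y n|)) := heq2
      _ ≤ γ * Real.exp (-c * (N₁:ℝ)^2) := hfinal

end Stmt4Aux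
end

section
/- For every Δ > 0, every N₁ ∈ ℕ, and every n ∈ {1,…,N₁}: (i) 𝒢_{1,2}(Δ·Υ·(2N₁+1)) − g(Δ·Υ·(N₁+1−n)·(2N₁+1)) ≤ θ¹_{n,Δ,N₁} ≤ 𝒢_{0,∞}(Δ·υ·N₁) − g(Δ·υ·(N₁+1−n)·(N₁+1)); (ii) if n ≥ 2 then 𝒢_{1,2}(Δ·Υ·(2n−1)) ≤ θ²_{n,Δ} ≤ 𝒢_{0,∞}(Δ·υ·(n+1)); (iii) if n ≤ N₁−1 then 𝒢_{1,2}(Δ·Υ·(N₁+n+1)) ≤ θ³_{n,Δ,N₁} ≤ 𝒢_{0,∞}(Δ·υ·(2n+1)). -/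
set_option maxHeartbeats 1000000


open MeasureTheory

/-- `g(x) = −ln(1 − e^{−x})`. -/
noncomputable def gfun (x : ℝ) : ℝ := -Real.log (1 - Real.exp (-x))

/-- `𝒢_{w₁,w₂}(ζ) = ∫_{w₁}^{w₂} g(ζ·x) dx` for finite endpoints. -/
noncomputable def Gint (w₁ w₂ ζ : ℝ) : ℝ := ∫ x in Set.Ioo w₁ w₂, gfun (ζ * x)

/-- `𝒢_{w₁,∞}(ζ) = ∫_{w₁}^{∞} g(ζ·x) dx`. -/
noncomputable def GintInf (w₁ ζ : ℝ) : ℝ := ∫ x in Set.Ioi w₁, gfun (ζ * x)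

/-- `θ¹_{n,Δ,N₁} = Σ_{j ∈ {1,…,N₁}, j≠n} g(Δ·(λ_{N₁+1} − λ_j))`. -/
noncomputable def theta1 (lam : ℕ → ℝ) (Δ : ℝ) (N₁ n : ℕ) : ℝ :=
  ∑ j ∈ (Finset.Icc 1 N₁).erase n, gfun (Δ * (lam (N₁ + 1) - lam j))

/-- `θ²_{n,Δ} = Σ_{j=1}^{n−1} g(Δ·(λ_n − λ_j))`. -/
noncomputable def theta2 (lam : ℕ → ℝ) (Δ : ℝ) (n : ℕ) : ℝ :=
  ∑ j ∈ Finset.Icc 1 (n - 1), gfun (Δ * (lam n - lam j))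

/-- `θ³_{n,Δ,N₁} = Σ_{j=n+1}^{N₁} g(Δ·(λ_j − λ_n))`. -/
noncomputable def theta3 (lam : ℕ → ℝ) (Δ : ℝ) (N₁ n : ℕ) : ℝ :=
  ∑ j ∈ Finset.Icc (n + 1) N₁, gfun (Δ * (lam j - lam n))


section Aux


lemma one_sub_exp_pos {x : ℝ} (hx : 0 < x) : 0 < 1 - Real.exp (-x) := by
  have : Real.exp (-x) < 1 := by
    rw [Real.exp_lt_one_iff]; linarith
  linarith

lemma gfun_nonneg {x : ℝ} (hx : 0 < x) : 0 ≤ gfun x := by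
  have h1 : 0 < 1 - Real.exp (-x) := one_sub_exp_pos hx
  have h2 : 1 - Real.exp (-x) ≤ 1 := by
    have := Real.exp_pos (-x); linarith
  simpa [gfun] using Real.log_nonpos (by linarith) h2

lemma gfun_anti {x y : ℝ} (hx : 0 < x) (hxy : x ≤ y) : gfun y ≤ gfun x := by
  have h1 : 0 < 1 - Real.exp (-x) := one_sub_exp_pos hx
  have h2 : 1 - Real.exp (-x) ≤ 1 - Real.exp (-y) := by
    have := Real.exp_le_exp.2 (neg_le_neg hxy); linarith
  simpa [gfun] using Real.log_le_log h1 h2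

lemma gfun_contOn : ContinuousOn gfun (Set.Ioi 0) := by
  intro x hx
  have hx' : (0:ℝ) < x := hx
  have h1 : 0 < 1 - Real.exp (-x) := one_sub_exp_pos hx'
  apply ContinuousAt.continuousWithinAt
  apply ContinuousAt.neg
  exact ContinuousAt.log (by fun_prop) (ne_of_gt h1)

lemma neg_log_le {y : ℝ} (hy : 0 < y) : -Real.log y ≤ (1 - y) / y := by
  have h := Real.log_le_sub_one_of_pos (x := y⁻¹) (by positivity)
  rw [Real.log_inv] at h
  have : y⁻¹ - 1 = (1 - y)/y := by field_simp
  linarith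

lemma gfun_integrableOn_Ioi : IntegrableOn gfun (Set.Ioi 0) := by
  have h1 : IntegrableOn gfun (Set.Ioo 0 1) := by
    have hbound : IntegrableOn (fun x : ℝ => Real.log 2 + 2 * x ^ (-(1/2) : ℝ)) (Set.Ioo 0 1) := by
      apply Integrable.add
      · exact integrableOn_const (by simp [Real.volume_Ioo])
      · exact ((intervalIntegral.integrableOn_Ioo_rpow_iff zero_lt_one).2 (by norm_num)).const_mul 2
    apply Integrable.mono' hbound
      ((gfun_contOn.mono (fun x hx => hx.1)).aestronglyMeasurable measurableSet_Ioo)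
    rw [ae_restrict_iff' measurableSet_Ioo]
    refine ae_of_all _ (fun x hx => ?_)
    obtain ⟨hx0, hx1⟩ := hx
    rw [Real.norm_of_nonneg (gfun_nonneg hx0)]
    -- g x ≤ log 2 - log x ≤ log 2 + 2 x^{-1/2}
    have hexp : Real.exp (-x) ≤ 1 / (1 + x) := by
      have h0 := Real.add_one_le_exp x
      rw [Real.exp_neg, one_div]
      exact inv_anti₀ (by linarith) (by linarith)
    have hlow : x / 2 ≤ 1 - Real.exp (-x) := by
      have h6 : 1/(1+x) ≤ 1 - x/2 := by
        rw [div_le_iff₀ (by linarith)]; nlinarith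
      linarith
    have hg : gfun x ≤ -Real.log (x/2) := by
      unfold gfun
      have := Real.log_le_log (by positivity : (0:ℝ) < x/2) hlow
      linarith
    have hsplit : -Real.log (x/2) = Real.log 2 - Real.log x := by
      rw [Real.log_div (ne_of_gt hx0) (by norm_num)]
      ring
    have hrpow : -Real.log x ≤ 2 * x ^ (-(1/2) : ℝ) := by
      have h3 := Real.log_le_sub_one_of_pos (Real.rpow_pos_of_pos hx0 (-(1/2)))
      rw [Real.log_rpow hx0] at h3
      have h4 : 0 < x ^ (-(1/2) : ℝ) := Real.rpow_pos_of_pos hx0 _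
      linarith
    linarith
  have h2 : IntegrableOn gfun (Set.Ici 1) := by
    have hbound : IntegrableOn (fun x : ℝ => (1 - Real.exp (-1))⁻¹ * Real.exp (-x)) (Set.Ici 1) := by
      have := (exp_neg_integrableOn_Ioi 0 one_pos).mono_set
        (show Set.Ici (1:ℝ) ⊆ Set.Ioi 0 by intro x hx; exact lt_of_lt_of_le one_pos (Set.mem_Ici.1 hx))
      simpa [IntegrableOn] using this.const_mul (1 - Real.exp (-1))⁻¹
    apply Integrable.mono' hbound
      ((gfun_contOn.mono (fun x (hx : x ∈ Set.Ici (1:ℝ)) => lt_of_lt_of_le one_pos (Set.mem_Ici.1 hx))).aestronglyMeasurable measurableSet_Ici)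
    rw [ae_restrict_iff' measurableSet_Ici]
    refine ae_of_all _ (fun x hx => ?_)
    have hx0 : (0:ℝ) < x := lt_of_lt_of_le one_pos (Set.mem_Ici.1 hx)
    rw [Real.norm_of_nonneg (gfun_nonneg hx0)]
    have hy : 0 < 1 - Real.exp (-x) := one_sub_exp_pos hx0
    have hy1 : 0 < 1 - Real.exp (-1) := one_sub_exp_pos one_pos
    have hmono : 1 - Real.exp (-1) ≤ 1 - Real.exp (-x) := by
      have := Real.exp_le_exp.2 (neg_le_neg (Set.mem_Ici.1 hx)); linarith
    have h := neg_log_le hy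
    have : (1 - (1 - Real.exp (-x))) / (1 - Real.exp (-x)) ≤ (1 - Real.exp (-1))⁻¹ * Real.exp (-x) := by
      rw [div_le_iff₀ hy]
      have hexpos : (0:ℝ) < Real.exp (-x) := Real.exp_pos _
      rw [inv_mul_eq_div, div_mul_eq_mul_div, le_div_iff₀ hy1]
      nlinarith
    unfold gfun
    linarith
  have : Set.Ioi (0:ℝ) = Set.Ioo 0 1 ∪ Set.Ici 1 := (Set.Ioo_union_Ici_eq_Ioi zero_lt_one).symm
  rw [this]
  exact h1.union h2

lemma gfun_mul_integrableOn {ζ : ℝ} (hζ : 0 < ζ) :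
    IntegrableOn (fun x => gfun (ζ * x)) (Set.Ioi 0) := by
  have := (integrableOn_Ioi_comp_mul_left_iff gfun 0 hζ).2
  simpa using this (by simpa using gfun_integrableOn_Ioi)


lemma gfun_mul_intOn {ζ a b : ℝ} (hζ : 0 < ζ) (ha : 0 ≤ a) :
    IntegrableOn (fun x => gfun (ζ * x)) (Set.Ioo a b) :=
  (gfun_mul_integrableOn hζ).mono_set (fun _ hx => lt_of_le_of_lt ha hx.1)

lemma int_le_g {ζ c : ℝ} (hζ : 0 < ζ) (hc : 0 < c) :
    (∫ x in Set.Ioo c (c+1), gfun (ζ * x)) ≤ gfun (ζ * c) := by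
  calc (∫ x in Set.Ioo c (c+1), gfun (ζ * x))
      ≤ ∫ _ in Set.Ioo c (c+1), gfun (ζ * c) := by
        refine setIntegral_mono_on (gfun_mul_intOn hζ hc.le)
          (integrableOn_const (by simp [Real.volume_Ioo]))
          measurableSet_Ioo (fun x hx => ?_)
        exact gfun_anti (mul_pos hζ hc) (mul_le_mul_of_nonneg_left hx.1.le hζ.le)
    _ = gfun (ζ * c) := by simp [Real.volume_Ioo]

lemma g_le_int {ζ c : ℝ} (hζ : 0 < ζ) (hc : 0 ≤ c) :
    gfun (ζ * (c+1)) ≤ ∫ x in Set.Ioo c (c+1), gfun (ζ * x) := by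
  calc gfun (ζ * (c+1))
      = ∫ _ in Set.Ioo c (c+1), gfun (ζ * (c+1)) := by simp [Real.volume_Ioo]
    _ ≤ ∫ x in Set.Ioo c (c+1), gfun (ζ * x) := by
        refine setIntegral_mono_on
          (integrableOn_const (by simp [Real.volume_Ioo]))
          (gfun_mul_intOn hζ hc)
          measurableSet_Ioo (fun x hx => ?_)
        exact gfun_anti (mul_pos hζ (lt_of_le_of_lt hc hx.1))
          (mul_le_mul_of_nonneg_left hx.2.le hζ.le)

lemma sum_int_eq {ζ : ℝ} (hζ : 0 < ζ) {a : ℝ} (ha : 0 ≤ a) (M : ℕ) :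
    ∑ i ∈ Finset.range M, ∫ x in Set.Ioo (a+(i:ℝ)) (a+(i:ℝ)+1), gfun (ζ * x)
      = ∫ x in Set.Ioo a (a+(M:ℝ)), gfun (ζ * x) := by
  have hint : ∀ k : ℕ, k < M → IntervalIntegrable (fun x => gfun (ζ * x)) volume
      (a + k) (a + (k+1:ℕ)) := by
    intro k _
    rw [intervalIntegrable_iff_integrableOn_Ioo_of_le (by push_cast; linarith)]
    exact gfun_mul_intOn hζ (by positivity)
  have h := intervalIntegral.sum_integral_adjacent_intervals (a := fun k : ℕ => a + k)
    (f := fun x => gfun (ζ * x)) hint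
  have conv : ∀ u v : ℝ, u ≤ v → (∫ x in u..v, gfun (ζ * x)) = ∫ x in Set.Ioo u v, gfun (ζ * x) := by
    intro u v huv
    rw [intervalIntegral.integral_of_le huv, integral_Ioc_eq_integral_Ioo]
  calc ∑ i ∈ Finset.range M, ∫ x in Set.Ioo (a+(i:ℝ)) (a+(i:ℝ)+1), gfun (ζ * x)
      = ∑ i ∈ Finset.range M, ∫ x in (a+(i:ℝ))..(a+((i+1:ℕ):ℝ)), gfun (ζ * x) := by
        refine Finset.sum_congr rfl (fun i _ => ?_)
        rw [conv _ _ (by push_cast; linarith)]; push_cast; ring_nf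
    _ = ∫ x in (a+((0:ℕ):ℝ))..(a+(M:ℝ)), gfun (ζ * x) := h
    _ = ∫ x in Set.Ioo a (a+(M:ℝ)), gfun (ζ * x) := by
        rw [conv _ _ (by push_cast; linarith [Nat.cast_nonneg (α := ℝ) M])]; norm_num

lemma gfun_ae_nonneg {ζ : ℝ} (hζ : 0 < ζ) {s : Set ℝ} (hs : MeasurableSet s)
    (h : s ⊆ Set.Ioi 0) : 0 ≤ᵐ[volume.restrict s] fun x => gfun (ζ * x) := by
  rw [Filter.EventuallyLE, ae_restrict_iff' hs]
  exact ae_of_all _ (fun x hx => gfun_nonneg (mul_pos hζ (h hx)))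

lemma sum_le_GintInf {ζ : ℝ} (hζ : 0 < ζ) (M : ℕ) :
    ∑ k ∈ Finset.Icc 1 M, gfun (ζ * (k:ℝ)) ≤ GintInf 0 ζ := by
  have key : ∑ k ∈ Finset.Icc 1 M, gfun (ζ * (k:ℝ))
      ≤ ∑ i ∈ Finset.range M, ∫ x in Set.Ioo ((0:ℝ)+(i:ℝ)) ((0:ℝ)+(i:ℝ)+1), gfun (ζ * x) := by
    rw [← Finset.Ico_add_one_right_eq_Icc, Finset.sum_Ico_eq_sum_range, Nat.add_sub_cancel]
    refine Finset.sum_le_sum (fun i _ => ?_)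
    have := g_le_int hζ (Nat.cast_nonneg i) (ζ := ζ)
    have heq : ζ * ((1+i:ℕ):ℝ) = ζ * ((i:ℝ)+1) := by push_cast; ring
    rw [heq]
    simpa using this
  rw [sum_int_eq hζ le_rfl M] at key
  refine key.trans (setIntegral_mono_set (gfun_mul_integrableOn hζ)
    (gfun_ae_nonneg hζ measurableSet_Ioi (fun _ h => h)) ?_)
  exact (Set.Ioo_subset_Ioi_self.trans (by norm_num)).eventuallyLE

lemma Gint_le_sum {ζ : ℝ} (hζ : 0 < ζ) {M : ℕ} (hM : 1 ≤ M) :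
    Gint 1 2 ζ ≤ ∑ k ∈ Finset.Icc 1 M, gfun (ζ * (k:ℝ)) := by
  have key : ∑ i ∈ Finset.range M, ∫ x in Set.Ioo ((1:ℝ)+(i:ℝ)) ((1:ℝ)+(i:ℝ)+1), gfun (ζ * x)
      ≤ ∑ k ∈ Finset.Icc 1 M, gfun (ζ * (k:ℝ)) := by
    rw [← Finset.Ico_add_one_right_eq_Icc, Finset.sum_Ico_eq_sum_range, Nat.add_sub_cancel]
    refine Finset.sum_le_sum (fun i _ => ?_)
    have := int_le_g hζ (show (0:ℝ) < 1 + i by positivity)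
    have heq : ζ * ((1+i:ℕ):ℝ) = ζ * ((1:ℝ)+(i:ℝ)) := by push_cast; ring
    rw [heq]
    exact this
  rw [sum_int_eq hζ (by norm_num) M] at key
  refine le_trans ?_ key
  unfold Gint
  refine setIntegral_mono_set (gfun_mul_intOn hζ (by norm_num))
    (gfun_ae_nonneg hζ measurableSet_Ioo (fun x hx => lt_trans one_pos hx.1)) ?_
  refine (Set.Ioo_subset_Ioo_right ?_).eventuallyLE
  have : (1:ℝ) ≤ M := by exact_mod_cast hM
  linarith

lemma sum_erase_le {ζ : ℝ} (hζ : 0 < ζ) {M k₀ : ℕ} (hk₀ : k₀ ∈ Finset.Icc 1 M) :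
    ∑ k ∈ (Finset.Icc 1 M).erase k₀, gfun (ζ * (k:ℝ)) ≤ GintInf 0 ζ - gfun (ζ * (k₀:ℝ)) := by
  rw [Finset.sum_erase_eq_sub hk₀]
  have := sum_le_GintInf hζ M
  linarith

lemma sum_erase_ge {ζ : ℝ} (hζ : 0 < ζ) {M k₀ : ℕ} (hM : 1 ≤ M) (hk₀ : k₀ ∈ Finset.Icc 1 M) :
    Gint 1 2 ζ - gfun (ζ * (k₀:ℝ)) ≤ ∑ k ∈ (Finset.Icc 1 M).erase k₀, gfun (ζ * (k:ℝ)) := by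
  rw [Finset.sum_erase_eq_sub hk₀]
  have := Gint_le_sum hζ hM
  linarith

lemma sum_flip_erase {M n : ℕ} (hn1 : 1 ≤ n) (hnM : n ≤ M) (f : ℕ → ℝ) :
    ∑ j ∈ (Finset.Icc 1 M).erase n, f (M + 1 - j)
      = ∑ k ∈ (Finset.Icc 1 M).erase (M + 1 - n), f k := by
  refine Finset.sum_nbij' (i := fun j => M + 1 - j) (j := fun k => M + 1 - k) ?_ ?_ ?_ ?_ ?_ <;>
    intro a ha <;>
    simp only [Finset.mem_erase, Finset.mem_Icc] at * <;> omega

lemma sum_flip {M : ℕ} (f : ℕ → ℝ) :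
    ∑ j ∈ Finset.Icc 1 M, f (M + 1 - j) = ∑ k ∈ Finset.Icc 1 M, f k := by
  refine Finset.sum_nbij' (i := fun j => M + 1 - j) (j := fun k => M + 1 - k) ?_ ?_ ?_ ?_ ?_ <;>
    intro a ha <;>
    simp only [Finset.mem_Icc] at * <;> omega

lemma sum_shift {a M : ℕ} (f : ℕ → ℝ) :
    ∑ j ∈ Finset.Icc (a+1) M, f (j - a) = ∑ k ∈ Finset.Icc 1 (M - a), f k := by
  refine Finset.sum_nbij' (i := fun j => j - a) (j := fun k => k + a) ?_ ?_ ?_ ?_ ?_ <;>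
    intro x hx <;>
    simp only [Finset.mem_Icc] at * <;> omega

end Aux

theorem stmt13 (lam : ℕ → ℝ) (υ Υ : ℝ) (hυ : 0 < υ) (hυΥ : υ ≤ Υ)
    (hmono : ∀ n m : ℕ, 1 ≤ n → n < m → lam n < lam m)
    (hgap : ∀ n m : ℕ, 1 ≤ n → n ≤ m →
      υ * ((m : ℝ) ^ 2 - (n : ℝ) ^ 2) ≤ lam m - lam n ∧
      lam m - lam n ≤ Υ * ((m : ℝ) ^ 2 - (n : ℝ) ^ 2))
    (Δ : ℝ) (hΔ : 0 < Δ) (N₁ : ℕ) (hN₁ : 1 ≤ N₁) (n : ℕ) (hn1 : 1 ≤ n) (hnN : n ≤ N₁) :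
    -- (i)
    (Gint 1 2 (Δ * Υ * (2 * (N₁ : ℝ) + 1)) -
        gfun (Δ * Υ * ((N₁ : ℝ) + 1 - (n : ℝ)) * (2 * (N₁ : ℝ) + 1)) ≤
      theta1 lam Δ N₁ n ∧
      theta1 lam Δ N₁ n ≤
        GintInf 0 (Δ * υ * (N₁ : ℝ)) -
          gfun (Δ * υ * ((N₁ : ℝ) + 1 - (n : ℝ)) * ((N₁ : ℝ) + 1))) ∧
    -- (ii)
    (2 ≤ n →
      Gint 1 2 (Δ * Υ * (2 * (n : ℝ) - 1)) ≤ theta2 lam Δ n ∧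
      theta2 lam Δ n ≤ GintInf 0 (Δ * υ * ((n : ℝ) + 1))) ∧
    -- (iii)
    (n ≤ N₁ - 1 →
      Gint 1 2 (Δ * Υ * ((N₁ : ℝ) + (n : ℝ) + 1)) ≤ theta3 lam Δ N₁ n ∧
      theta3 lam Δ N₁ n ≤ GintInf 0 (Δ * υ * (2 * (n : ℝ) + 1))) := by
  have hΥ : 0 < Υ := lt_of_lt_of_le hυ hυΥ
  have hN₁R : (1:ℝ) ≤ (N₁:ℝ) := by exact_mod_cast hN₁
  have hn1R : (1:ℝ) ≤ (n:ℝ) := by exact_mod_cast hn1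
  have hnNR : (n:ℝ) ≤ (N₁:ℝ) := by exact_mod_cast hnN
  have hk₀mem : N₁ + 1 - n ∈ Finset.Icc 1 N₁ := Finset.mem_Icc.2 ⟨by omega, by omega⟩
  have hk₀cast : ((N₁ + 1 - n : ℕ) : ℝ) = (N₁:ℝ) + 1 - n := by
    rw [Nat.cast_sub (by omega)]; push_cast; ring
  refine ⟨⟨?_, ?_⟩, fun h2n => ⟨?_, ?_⟩, fun hn' => ⟨?_, ?_⟩⟩
  · -- (i) lower
    set ζ := Δ * Υ * (2 * (N₁:ℝ) + 1) with hζdef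
    have hζpos : 0 < ζ := by
      have : (0:ℝ) < 2 * (N₁:ℝ) + 1 := by linarith
      positivity
    have step1 : ∑ j ∈ (Finset.Icc 1 N₁).erase n, gfun (ζ * ((N₁ + 1 - j : ℕ) : ℝ))
        ≤ theta1 lam Δ N₁ n := by
      unfold theta1
      refine Finset.sum_le_sum (fun j hj => ?_)
      obtain ⟨hj1, hjN⟩ := Finset.mem_Icc.1 (Finset.mem_of_mem_erase hj)
      have hj1R : (1:ℝ) ≤ (j:ℝ) := by exact_mod_cast hj1
      have hjNR : (j:ℝ) ≤ (N₁:ℝ) := by exact_mod_cast hjN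
      have hc : ((N₁ + 1 - j : ℕ) : ℝ) = (N₁:ℝ) + 1 - j := by
        rw [Nat.cast_sub (by omega)]; push_cast; ring
      rw [hc]
      obtain ⟨hlo, hhi⟩ := hgap j (N₁ + 1) hj1 (by omega)
      push_cast at hlo hhi
      have hdpos : 0 < Δ * (lam (N₁ + 1) - lam j) :=
        mul_pos hΔ (sub_pos.2 (hmono j (N₁ + 1) hj1 (by omega)))
      refine gfun_anti hdpos ?_
      have key := mul_le_mul_of_nonneg_left hhi hΔ.le
      nlinarith [mul_nonneg (mul_nonneg (mul_pos hΔ hΥ).le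
        (show (0:ℝ) ≤ (N₁:ℝ) + 1 - j by linarith))
        (show (0:ℝ) ≤ (N₁:ℝ) - j by linarith)]
    have step2 := sum_flip_erase hn1 hnN (fun k => gfun (ζ * (k:ℝ)))
    have step3 := sum_erase_ge hζpos hN₁ hk₀mem
    have heq : ζ * (((N₁ + 1 - n : ℕ)) : ℝ) = Δ * Υ * ((N₁:ℝ) + 1 - n) * (2 * (N₁:ℝ) + 1) := by
      rw [hk₀cast, hζdef]; ring
    simp only [heq] at step3
    rw [step2] at step1
    linarith
  · -- (i) upper
    set ζ := Δ * υ * (N₁:ℝ) with hζdef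
    have hζpos : 0 < ζ := by
      have : (0:ℝ) < (N₁:ℝ) := by linarith
      positivity
    have step1 : theta1 lam Δ N₁ n
        ≤ ∑ j ∈ (Finset.Icc 1 N₁).erase n, gfun (ζ * ((N₁ + 1 - j : ℕ) : ℝ)) := by
      unfold theta1
      refine Finset.sum_le_sum (fun j hj => ?_)
      obtain ⟨hj1, hjN⟩ := Finset.mem_Icc.1 (Finset.mem_of_mem_erase hj)
      have hj1R : (1:ℝ) ≤ (j:ℝ) := by exact_mod_cast hj1
      have hjNR : (j:ℝ) ≤ (N₁:ℝ) := by exact_mod_cast hjN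
      have hc : ((N₁ + 1 - j : ℕ) : ℝ) = (N₁:ℝ) + 1 - j := by
        rw [Nat.cast_sub (by omega)]; push_cast; ring
      rw [hc]
      obtain ⟨hlo, hhi⟩ := hgap j (N₁ + 1) hj1 (by omega)
      push_cast at hlo hhi
      have hbpos : 0 < ζ * ((N₁:ℝ) + 1 - j) :=
        mul_pos hζpos (by linarith)
      refine gfun_anti hbpos ?_
      have key := mul_le_mul_of_nonneg_left hlo hΔ.le
      nlinarith [mul_nonneg (mul_nonneg (mul_pos hΔ hυ).le
        (show (0:ℝ) ≤ (N₁:ℝ) + 1 - j by linarith))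
        (show (0:ℝ) ≤ (j:ℝ) + 1 by linarith)]
    have step2 := sum_flip_erase hn1 hnN (fun k => gfun (ζ * (k:ℝ)))
    have step3 := sum_erase_le hζpos hk₀mem
    rw [step2] at step1
    have step4 : gfun (Δ * υ * ((N₁:ℝ) + 1 - n) * ((N₁:ℝ) + 1))
        ≤ gfun (ζ * (((N₁ + 1 - n : ℕ)) : ℝ)) := by
      rw [hk₀cast]
      refine gfun_anti ?_ ?_
      · exact mul_pos hζpos (by linarith)
      · rw [hζdef]
        nlinarith [mul_nonneg (mul_nonneg (mul_pos hΔ hυ).le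
          (show (0:ℝ) ≤ (N₁:ℝ) + 1 - n by linarith)) (show (0:ℝ) ≤ (1:ℝ) by norm_num)]
    linarith
  · -- (ii) lower
    have h2nR : (2:ℝ) ≤ (n:ℝ) := by exact_mod_cast h2n
    set ζ := Δ * Υ * (2 * (n:ℝ) - 1) with hζdef
    have hζpos : 0 < ζ := by
      have : (0:ℝ) < 2 * (n:ℝ) - 1 := by linarith
      positivity
    have step1 : ∑ j ∈ Finset.Icc 1 (n - 1), gfun (ζ * ((n - j : ℕ) : ℝ))
        ≤ theta2 lam Δ n := by
      unfold theta2
      refine Finset.sum_le_sum (fun j hj => ?_)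
      obtain ⟨hj1, hjn⟩ := Finset.mem_Icc.1 hj
      have hj1R : (1:ℝ) ≤ (j:ℝ) := by exact_mod_cast hj1
      have hjnR : (j:ℝ) ≤ (n:ℝ) - 1 := by
        have : (j:ℝ) ≤ ((n-1:ℕ):ℝ) := by exact_mod_cast hjn
        rw [Nat.cast_sub (by omega)] at this; simpa using this
      have hc : ((n - j : ℕ) : ℝ) = (n:ℝ) - j := by
        rw [Nat.cast_sub (by omega)]
      rw [hc]
      obtain ⟨hlo, hhi⟩ := hgap j n hj1 (by omega)
      have hdpos : 0 < Δ * (lam n - lam j) :=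
        mul_pos hΔ (sub_pos.2 (hmono j n hj1 (by omega)))
      refine gfun_anti hdpos ?_
      have key := mul_le_mul_of_nonneg_left hhi hΔ.le
      nlinarith [mul_nonneg (mul_nonneg (mul_pos hΔ hΥ).le
        (show (0:ℝ) ≤ (n:ℝ) - j by linarith))
        (show (0:ℝ) ≤ (n:ℝ) - 1 - j by linarith)]
    have step2 : ∑ j ∈ Finset.Icc 1 (n - 1), gfun (ζ * ((n - j : ℕ) : ℝ))
        = ∑ k ∈ Finset.Icc 1 (n - 1), gfun (ζ * (k:ℝ)) := by
      rw [← sum_flip (M := n - 1) (fun k => gfun (ζ * (k:ℝ)))]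
      refine Finset.sum_congr rfl (fun j hj => ?_)
      rw [show n - 1 + 1 - j = n - j from by omega]
    rw [step2] at step1
    exact le_trans (Gint_le_sum hζpos (by omega)) step1
  · -- (ii) upper
    set ζ := Δ * υ * ((n:ℝ) + 1) with hζdef
    have hζpos : 0 < ζ := by
      have : (0:ℝ) < (n:ℝ) + 1 := by linarith
      positivity
    have step1 : theta2 lam Δ n
        ≤ ∑ j ∈ Finset.Icc 1 (n - 1), gfun (ζ * ((n - j : ℕ) : ℝ)) := by
      unfold theta2
      refine Finset.sum_le_sum (fun j hj => ?_)
      obtain ⟨hj1, hjn⟩ := Finset.mem_Icc.1 hj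
      have hj1R : (1:ℝ) ≤ (j:ℝ) := by exact_mod_cast hj1
      have hjnR : (j:ℝ) ≤ (n:ℝ) - 1 := by
        have : (j:ℝ) ≤ ((n-1:ℕ):ℝ) := by exact_mod_cast hjn
        rw [Nat.cast_sub (by omega)] at this; simpa using this
      have hc : ((n - j : ℕ) : ℝ) = (n:ℝ) - j := by
        rw [Nat.cast_sub (by omega)]
      rw [hc]
      obtain ⟨hlo, hhi⟩ := hgap j n hj1 (by omega)
      have hbpos : 0 < ζ * ((n:ℝ) - j) := mul_pos hζpos (by linarith)
      refine gfun_anti hbpos ?_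
      have key := mul_le_mul_of_nonneg_left hlo hΔ.le
      nlinarith [mul_nonneg (mul_nonneg (mul_pos hΔ hυ).le
        (show (0:ℝ) ≤ (n:ℝ) - j by linarith))
        (show (0:ℝ) ≤ (j:ℝ) - 1 by linarith)]
    have step2 : ∑ j ∈ Finset.Icc 1 (n - 1), gfun (ζ * ((n - j : ℕ) : ℝ))
        = ∑ k ∈ Finset.Icc 1 (n - 1), gfun (ζ * (k:ℝ)) := by
      rw [← sum_flip (M := n - 1) (fun k => gfun (ζ * (k:ℝ)))]
      refine Finset.sum_congr rfl (fun j hj => ?_)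
      rw [show n - 1 + 1 - j = n - j from by omega]
    rw [step2] at step1
    exact le_trans step1 (sum_le_GintInf hζpos (n - 1))
  · -- (iii) lower
    have hnN1 : n + 1 ≤ N₁ := by omega
    set ζ := Δ * Υ * ((N₁:ℝ) + (n:ℝ) + 1) with hζdef
    have hζpos : 0 < ζ := by
      have : (0:ℝ) < (N₁:ℝ) + (n:ℝ) + 1 := by linarith
      positivity
    have step1 : ∑ j ∈ Finset.Icc (n + 1) N₁, gfun (ζ * ((j - n : ℕ) : ℝ))
        ≤ theta3 lam Δ N₁ n := by
      unfold theta3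
      refine Finset.sum_le_sum (fun j hj => ?_)
      obtain ⟨hj1, hjN⟩ := Finset.mem_Icc.1 hj
      have hj1R : (n:ℝ) + 1 ≤ (j:ℝ) := by exact_mod_cast hj1
      have hjNR : (j:ℝ) ≤ (N₁:ℝ) := by exact_mod_cast hjN
      have hc : ((j - n : ℕ) : ℝ) = (j:ℝ) - n := by
        rw [Nat.cast_sub (by omega)]
      rw [hc]
      obtain ⟨hlo, hhi⟩ := hgap n j hn1 (by omega)
      have hdpos : 0 < Δ * (lam j - lam n) :=
        mul_pos hΔ (sub_pos.2 (hmono n j hn1 (by omega)))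
      refine gfun_anti hdpos ?_
      have key := mul_le_mul_of_nonneg_left hhi hΔ.le
      nlinarith [mul_nonneg (mul_nonneg (mul_pos hΔ hΥ).le
        (show (0:ℝ) ≤ (j:ℝ) - n by linarith))
        (show (0:ℝ) ≤ (N₁:ℝ) + 1 - j by linarith)]
    have step2 : ∑ j ∈ Finset.Icc (n + 1) N₁, gfun (ζ * ((j - n : ℕ) : ℝ))
        = ∑ k ∈ Finset.Icc 1 (N₁ - n), gfun (ζ * (k:ℝ)) :=
      sum_shift (fun k => gfun (ζ * (k:ℝ)))
    rw [step2] at step1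
    exact le_trans (Gint_le_sum hζpos (by omega)) step1
  · -- (iii) upper
    have hnN1 : n + 1 ≤ N₁ := by omega
    set ζ := Δ * υ * (2 * (n:ℝ) + 1) with hζdef
    have hζpos : 0 < ζ := by
      have : (0:ℝ) < 2 * (n:ℝ) + 1 := by linarith
      positivity
    have step1 : theta3 lam Δ N₁ n
        ≤ ∑ j ∈ Finset.Icc (n + 1) N₁, gfun (ζ * ((j - n : ℕ) : ℝ)) := by
      unfold theta3
      refine Finset.sum_le_sum (fun j hj => ?_)
      obtain ⟨hj1, hjN⟩ := Finset.mem_Icc.1 hj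
      have hj1R : (n:ℝ) + 1 ≤ (j:ℝ) := by exact_mod_cast hj1
      have hjNR : (j:ℝ) ≤ (N₁:ℝ) := by exact_mod_cast hjN
      have hc : ((j - n : ℕ) : ℝ) = (j:ℝ) - n := by
        rw [Nat.cast_sub (by omega)]
      rw [hc]
      obtain ⟨hlo, hhi⟩ := hgap n j hn1 (by omega)
      have hbpos : 0 < ζ * ((j:ℝ) - n) := mul_pos hζpos (by linarith)
      refine gfun_anti hbpos ?_
      have key := mul_le_mul_of_nonneg_left hlo hΔ.le
      nlinarith [mul_nonneg (mul_nonneg (mul_pos hΔ hυ).le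
        (show (0:ℝ) ≤ (j:ℝ) - n by linarith))
        (show (0:ℝ) ≤ (j:ℝ) - n - 1 by linarith)]
    have step2 : ∑ j ∈ Finset.Icc (n + 1) N₁, gfun (ζ * ((j - n : ℕ) : ℝ))
        = ∑ k ∈ Finset.Icc 1 (N₁ - n), gfun (ζ * (k:ℝ)) :=
      sum_shift (fun k => gfun (ζ * (k:ℝ)))
    rw [step2] at step1
    exact le_trans step1 (sum_le_GintInf hζpos (N₁ - n))
end

section
/- Fix Δ* > 0. Then: (i) sup{θ¹_{n,Δ,N₁} : 1 ≤ n ≤ N₁, Δ ≥ Δ*} → 0 as N₁ → ∞, and there exists a constant C = C(Δ*) > 0 such that θ²_{n,Δ} ≤ C and θ³_{n,Δ,N₁} ≤ C for all N₁ ∈ ℕ, all n ∈ {1,…,N₁}, and all Δ ≥ Δ*; (ii) there exists C' = C'(Δ*) > 0 with θ¹_{n,Δ,N₁} ≤ C' for all N₁ ∈ ℕ, n ∈ {1,…,N₁}, Δ ≥ Δ*, and each of sup{θ¹_{n,Δ,N₁} : 1 ≤ n ≤ N₁, N₁ ∈ ℕ}, sup{θ²_{n,Δ} : 1 ≤ n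 ≤ N₁, N₁ ∈ ℕ}, and sup{θ³_{n,Δ,N₁} : 1 ≤ n ≤ N₁, N₁ ∈ ℕ} tends to 0 as Δ → ∞. -/
open MeasureTheory

private lemma geomle (q : ℝ) (h0 : 0 ≤ q) (h1 : q < 1) (n : ℕ) :
    ∑ i ∈ Finset.range n, q ^ i ≤ 1 / (1 - q) := by
  rw [geom_sum_eq (by linarith : q ≠ 1) n]
  have h : (q ^ n - 1) / (q - 1) = (1 - q ^ n) / (1 - q) := by
    rw [← neg_div_neg_eq]; ring_nf
  rw [h]
  have hq : 0 < 1 - q := by linarith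
  have hp : 0 ≤ q ^ n := pow_nonneg h0 n
  exact (div_le_div_iff_of_pos_right hq).mpr (by linarith)

private lemma gfun_le_exp_div {b x : ℝ} (hb : 0 < b) (hbx : b ≤ x) :
    gfun x ≤ Real.exp (-x) / (1 - Real.exp (-b)) := by
  have hx : 0 < x := hb.trans_le hbx
  have ht1 : Real.exp (-x) < 1 := Real.exp_lt_one_iff.mpr (by linarith)
  have htb : Real.exp (-b) < 1 := Real.exp_lt_one_iff.mpr (by linarith)
  have ht0 : 0 < Real.exp (-x) := Real.exp_pos _
  have h1 : 0 < 1 - Real.exp (-x) := by linarith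
  have h2 : 0 < 1 - Real.exp (-b) := by linarith
  have hle : Real.exp (-x) ≤ Real.exp (-b) := Real.exp_le_exp.mpr (by linarith)
  have hlog : Real.log (1 - Real.exp (-x))⁻¹ ≤ (1 - Real.exp (-x))⁻¹ - 1 :=
    Real.log_le_sub_one_of_pos (by positivity)
  have hg : gfun x = Real.log (1 - Real.exp (-x))⁻¹ := by
    unfold gfun; rw [Real.log_inv]
  rw [hg]
  have heq : (1 - Real.exp (-x))⁻¹ - 1 = Real.exp (-x) / (1 - Real.exp (-x)) := by
    field_simp
    ring
  have hmon : Real.exp (-x) / (1 - Real.exp (-x)) ≤ Real.exp (-x) / (1 - Real.exp (-b)) := by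
    apply div_le_div_of_nonneg_left ht0.le h2 (by linarith)
  linarith [heq ▸ hlog]

private lemma sum_pow_Icc_le {q : ℝ} (hq0 : 0 ≤ q) (hq1 : q < 1) (m M : ℕ) :
    ∑ k ∈ Finset.Icc m M, q ^ k ≤ q ^ m / (1 - q) := by
  have hq : 0 < 1 - q := by linarith
  rcases le_or_gt m M with h | h
  · have : Finset.Icc m M = Finset.map ⟨fun i => m + i, add_right_injective m⟩
        (Finset.range (M + 1 - m)) := by
      ext k
      simp only [Finset.mem_Icc, Finset.mem_map, Finset.mem_range, Function.Embedding.coeFn_mk]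
      constructor
      · rintro ⟨h1, h2⟩; exact ⟨k - m, by omega, by omega⟩
      · rintro ⟨a, ha, rfl⟩; omega
    rw [this, Finset.sum_map]
    simp only [Function.Embedding.coeFn_mk, pow_add]
    rw [← Finset.mul_sum]
    rw [div_eq_mul_one_div]
    exact mul_le_mul_of_nonneg_left (geomle q hq0 hq1 _) (pow_nonneg hq0 m)
  · rw [Finset.Icc_eq_empty (by omega)]
    simp
    positivity

private lemma sum_gfun_le {υ Δs Δ : ℝ} (hυ : 0 < υ) (hΔs : 0 < Δs) (hΔ : Δs ≤ Δ)
    (s : Finset ℕ) (f : ℕ → ℕ) (x : ℕ → ℝ)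
    (hinj : ∀ a ∈ s, ∀ b ∈ s, f a = f b → a = b) (m : ℕ) (hm : 1 ≤ m)
    (hfm : ∀ j ∈ s, m ≤ f j)
    (hx : ∀ j ∈ s, υ * (f j : ℝ) ≤ x j) :
    ∑ j ∈ s, gfun (Δ * x j) ≤
      (1 - Real.exp (-(Δs * υ)))⁻¹ *
        (Real.exp (-(Δ * υ)) ^ m / (1 - Real.exp (-(Δ * υ)))) := by
  have hΔpos : 0 < Δ := hΔs.trans_le hΔ
  have hb : 0 < Δs * υ := by positivity
  have hqs1 : Real.exp (-(Δs * υ)) < 1 := Real.exp_lt_one_iff.mpr (by linarith)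
  have hcs : 0 < 1 - Real.exp (-(Δs * υ)) := by linarith
  set q : ℝ := Real.exp (-(Δ * υ)) with hqdef
  have hq0 : 0 < q := Real.exp_pos _
  have hq1 : q < 1 := Real.exp_lt_one_iff.mpr (by nlinarith)
  -- termwise bound
  have hterm : ∀ j ∈ s, gfun (Δ * x j) ≤ (1 - Real.exp (-(Δs * υ)))⁻¹ * q ^ (f j) := by
    intro j hj
    have hfj : (1 : ℝ) ≤ (f j : ℝ) := by
      exact_mod_cast (hm.trans (hfm j hj))
    have hxj : υ * (f j : ℝ) ≤ x j := hx j hj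
    have hbound : Δs * υ ≤ Δ * x j := by
      have h3 : Δ * (υ * (f j : ℝ)) ≤ Δ * x j := mul_le_mul_of_nonneg_left hxj hΔpos.le
      have h4 : Δ * υ * 1 ≤ Δ * υ * (f j : ℝ) :=
        mul_le_mul_of_nonneg_left hfj (by positivity)
      have h5 : Δs * υ ≤ Δ * υ := by nlinarith
      nlinarith
    have h1 := gfun_le_exp_div hb hbound
    have h2 : Real.exp (-(Δ * x j)) ≤ q ^ (f j) := by
      rw [hqdef, ← Real.exp_nat_mul]
      apply Real.exp_le_exp.mpr
      have : (f j : ℝ) * -(Δ * υ) = -(Δ * (υ * (f j : ℝ))) := by ring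
      rw [this]
      nlinarith
    calc gfun (Δ * x j) ≤ Real.exp (-(Δ * x j)) / (1 - Real.exp (-(Δs * υ))) := h1
      _ ≤ q ^ (f j) / (1 - Real.exp (-(Δs * υ))) := by
          exact (div_le_div_iff_of_pos_right hcs).mpr h2
      _ = (1 - Real.exp (-(Δs * υ)))⁻¹ * q ^ (f j) := by rw [div_eq_inv_mul]
  calc ∑ j ∈ s, gfun (Δ * x j) ≤ ∑ j ∈ s, (1 - Real.exp (-(Δs * υ)))⁻¹ * q ^ (f j) :=
        Finset.sum_le_sum hterm
    _ = (1 - Real.exp (-(Δs * υ)))⁻¹ * ∑ j ∈ s, q ^ (f j) := by rw [Finset.mul_sum]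
    _ ≤ (1 - Real.exp (-(Δs * υ)))⁻¹ * (q ^ m / (1 - q)) := by
        apply mul_le_mul_of_nonneg_left _ (by positivity)
        have himg : ∑ j ∈ s, q ^ (f j) = ∑ k ∈ s.image f, q ^ k :=
          (Finset.sum_image hinj).symm
        rw [himg]
        have hsub : s.image f ⊆ Finset.Icc m (s.sup f) := by
          intro k hk
          obtain ⟨j, hj, rfl⟩ := Finset.mem_image.mp hk
          exact Finset.mem_Icc.mpr ⟨hfm j hj, Finset.le_sup hj⟩
        calc ∑ k ∈ s.image f, q ^ k ≤ ∑ k ∈ Finset.Icc m (s.sup f), q ^ k :=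
              Finset.sum_le_sum_of_subset_of_nonneg hsub (fun i _ _ => by positivity)
          _ ≤ q ^ m / (1 - q) := sum_pow_Icc_le hq0.le hq1 m (s.sup f)

theorem stmt14 (lam : ℕ → ℝ) (υ Υ : ℝ) (hυ : 0 < υ) (hυΥ : υ ≤ Υ)
    (hmono : ∀ n m : ℕ, 1 ≤ n → n < m → lam n < lam m)
    (hgap : ∀ n m : ℕ, 1 ≤ n → n ≤ m →
      υ * ((m : ℝ) ^ 2 - (n : ℝ) ^ 2) ≤ lam m - lam n ∧
      lam m - lam n ≤ Υ * ((m : ℝ) ^ 2 - (n : ℝ) ^ 2))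
    (Δs : ℝ) (hΔs : 0 < Δs) :
    -- (i): sup of θ¹ over 1 ≤ n ≤ N₁ and Δ ≥ Δ* tends to 0 as N₁ → ∞
    (∀ δ : ℝ, 0 < δ → ∃ M : ℕ, ∀ N₁ : ℕ, M ≤ N₁ →
      ∀ n : ℕ, 1 ≤ n → n ≤ N₁ → ∀ Δ : ℝ, Δs ≤ Δ →
        theta1 lam Δ N₁ n < δ) ∧
    -- (i): uniform bound C = C(Δ*) on θ² and θ³
    (∃ C : ℝ, 0 < C ∧ ∀ N₁ : ℕ, ∀ n : ℕ, 1 ≤ n → n ≤ N₁ → ∀ Δ : ℝ, Δs ≤ Δ →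
      theta2 lam Δ n ≤ C ∧ theta3 lam Δ N₁ n ≤ C) ∧
    -- (ii): uniform bound C' = C'(Δ*) on θ¹
    (∃ C' : ℝ, 0 < C' ∧ ∀ N₁ : ℕ, ∀ n : ℕ, 1 ≤ n → n ≤ N₁ → ∀ Δ : ℝ, Δs ≤ Δ →
      theta1 lam Δ N₁ n ≤ C') ∧
    -- (ii): each sup over 1 ≤ n ≤ N₁, N₁ ∈ ℕ tends to 0 as Δ → ∞
    (∀ δ : ℝ, 0 < δ → ∃ Δ₀ : ℝ, ∀ Δ : ℝ, Δ₀ ≤ Δ →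
      ∀ N₁ : ℕ, ∀ n : ℕ, 1 ≤ n → n ≤ N₁ →
        theta1 lam Δ N₁ n < δ ∧ theta2 lam Δ n < δ ∧ theta3 lam Δ N₁ n < δ) := by
  have hqs1 : Real.exp (-(Δs * υ)) < 1 := Real.exp_lt_one_iff.mpr (by nlinarith)
  have hqs0 : (0 : ℝ) < Real.exp (-(Δs * υ)) := Real.exp_pos _
  set qs : ℝ := Real.exp (-(Δs * υ)) with hqsdef
  set c : ℝ := (1 - qs)⁻¹ with hcdef
  have hc : 0 < c := by rw [hcdef]; exact inv_pos.mpr (by linarith)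
  have hc2 : 0 < c ^ 2 := pow_pos hc 2
  -- key bounds for each theta
  have key1 : ∀ N₁ n : ℕ, 1 ≤ n → n ≤ N₁ → ∀ Δ : ℝ, Δs ≤ Δ →
      theta1 lam Δ N₁ n ≤
        c * (Real.exp (-(Δ * υ)) ^ (N₁ + 2) / (1 - Real.exp (-(Δ * υ)))) := by
    intro N₁ n hn hnN Δ hΔ
    unfold theta1
    apply sum_gfun_le hυ hΔs hΔ _ (fun j => (N₁ + 1 - j) * (N₁ + 2))
      (fun j => lam (N₁ + 1) - lam j) ?_ (N₁ + 2) (by omega) ?_ ?_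
    · intro a ha b hb h
      beta_reduce at h
      simp only [Finset.mem_erase, Finset.mem_Icc] at ha hb
      have := Nat.eq_of_mul_eq_mul_right (show 0 < N₁ + 2 by omega) h
      omega
    · intro j hj
      beta_reduce at hj ⊢
      simp only [Finset.mem_erase, Finset.mem_Icc] at hj
      have h1 : 1 ≤ N₁ + 1 - j := by omega
      simpa using Nat.mul_le_mul_right (N₁ + 2) h1
    · intro j hj
      beta_reduce at hj ⊢
      simp only [Finset.mem_erase, Finset.mem_Icc] at hj
      obtain ⟨hne, hj1, hj2⟩ := hj
      have hg := (hgap j (N₁ + 1) hj1 (by omega)).1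
      push_cast at hg
      have hcast : (((N₁ + 1 - j) * (N₁ + 2) : ℕ) : ℝ) =
          ((N₁ : ℝ) + 1 - j) * ((N₁ : ℝ) + 2) := by
        have : j ≤ N₁ + 1 := by omega
        push_cast [Nat.cast_sub this]
        ring
      rw [hcast]
      have hj1' : (1 : ℝ) ≤ (j : ℝ) := by exact_mod_cast hj1
      have hj2' : (j : ℝ) ≤ (N₁ : ℝ) := by exact_mod_cast hj2
      nlinarith [mul_nonneg (by linarith : (0:ℝ) ≤ (N₁ : ℝ) + 1 - j)
        (by linarith : (0:ℝ) ≤ (j : ℝ) - 1)]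
  have key2 : ∀ n : ℕ, 1 ≤ n → ∀ Δ : ℝ, Δs ≤ Δ →
      theta2 lam Δ n ≤
        c * (Real.exp (-(Δ * υ)) ^ 1 / (1 - Real.exp (-(Δ * υ)))) := by
    intro n hn Δ hΔ
    unfold theta2
    apply sum_gfun_le hυ hΔs hΔ _ (fun j => n - j) (fun j => lam n - lam j)
      ?_ 1 le_rfl ?_ ?_
    · intro a ha b hb h
      beta_reduce at h
      simp only [Finset.mem_Icc] at ha hb
      omega
    · intro j hj
      beta_reduce at hj ⊢
      simp only [Finset.mem_Icc] at hj
      omega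
    · intro j hj
      beta_reduce at hj ⊢
      simp only [Finset.mem_Icc] at hj
      obtain ⟨hj1, hj2⟩ := hj
      have hg := (hgap j n hj1 (by omega)).1
      have hcast : ((n - j : ℕ) : ℝ) = (n : ℝ) - j := by
        have : j ≤ n := by omega
        push_cast [Nat.cast_sub this]; ring
      rw [hcast]
      have hj1' : (1 : ℝ) ≤ (j : ℝ) := by exact_mod_cast hj1
      have hj2' : (j : ℝ) ≤ (n : ℝ) := by
        have : j ≤ n := by omega
        exact_mod_cast this
      nlinarith [mul_nonneg (by linarith : (0:ℝ) ≤ (n : ℝ) - j)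
        (by linarith : (0:ℝ) ≤ (n : ℝ) + (j : ℝ) - 1)]
  have key3 : ∀ N₁ n : ℕ, 1 ≤ n → ∀ Δ : ℝ, Δs ≤ Δ →
      theta3 lam Δ N₁ n ≤
        c * (Real.exp (-(Δ * υ)) ^ 1 / (1 - Real.exp (-(Δ * υ)))) := by
    intro N₁ n hn Δ hΔ
    unfold theta3
    apply sum_gfun_le hυ hΔs hΔ _ (fun j => j - n) (fun j => lam j - lam n)
      ?_ 1 le_rfl ?_ ?_
    · intro a ha b hb h
      beta_reduce at h
      simp only [Finset.mem_Icc] at ha hb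
      omega
    · intro j hj
      beta_reduce at hj ⊢
      simp only [Finset.mem_Icc] at hj
      omega
    · intro j hj
      beta_reduce at hj ⊢
      simp only [Finset.mem_Icc] at hj
      obtain ⟨hj1, hj2⟩ := hj
      have hg := (hgap n j hn (by omega)).1
      have hcast : ((j - n : ℕ) : ℝ) = (j : ℝ) - n := by
        have : n ≤ j := by omega
        push_cast [Nat.cast_sub this]; ring
      rw [hcast]
      have hn1' : (1 : ℝ) ≤ (n : ℝ) := by exact_mod_cast hn
      have hnj' : (n : ℝ) ≤ (j : ℝ) := by
        have : n ≤ j := by omega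
        exact_mod_cast this
      nlinarith [mul_nonneg (by linarith : (0:ℝ) ≤ (j : ℝ) - n)
        (by linarith : (0:ℝ) ≤ (j : ℝ) + (n : ℝ) - 1)]
  -- general simplification of the bound
  have hB : ∀ Δ : ℝ, Δs ≤ Δ → ∀ m : ℕ,
      c * (Real.exp (-(Δ * υ)) ^ m / (1 - Real.exp (-(Δ * υ)))) ≤
        c ^ 2 * Real.exp (-(Δ * υ)) ^ m := by
    intro Δ hΔ m
    have hq0 : (0 : ℝ) < Real.exp (-(Δ * υ)) := Real.exp_pos _
    have hqqs : Real.exp (-(Δ * υ)) ≤ qs := by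
      rw [hqsdef]
      apply Real.exp_le_exp.mpr
      nlinarith
    have h1 : 1 - qs ≤ 1 - Real.exp (-(Δ * υ)) := by linarith
    have h2 : Real.exp (-(Δ * υ)) ^ m / (1 - Real.exp (-(Δ * υ))) ≤
        Real.exp (-(Δ * υ)) ^ m / (1 - qs) :=
      div_le_div_of_nonneg_left (by positivity) (by linarith) h1
    calc c * (Real.exp (-(Δ * υ)) ^ m / (1 - Real.exp (-(Δ * υ))))
        ≤ c * (Real.exp (-(Δ * υ)) ^ m / (1 - qs)) :=
          mul_le_mul_of_nonneg_left h2 hc.le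
      _ = c ^ 2 * Real.exp (-(Δ * υ)) ^ m := by
          rw [hcdef, div_eq_mul_inv]; ring
  have hqpow : ∀ Δ : ℝ, Δs ≤ Δ → ∀ m : ℕ,
      Real.exp (-(Δ * υ)) ^ m ≤ qs ^ m := by
    intro Δ hΔ m
    apply pow_le_pow_left₀ (Real.exp_pos _).le
    rw [hqsdef]
    apply Real.exp_le_exp.mpr
    nlinarith
  refine ⟨?_, ?_, ?_, ?_⟩
  · -- N₁ → ∞ decay of θ¹
    intro δ hδ
    have hδc : 0 < δ / c ^ 2 := div_pos hδ hc2
    obtain ⟨M, hM⟩ := exists_pow_lt_of_lt_one hδc hqs1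
    refine ⟨M, fun N₁ hMN n hn hnN Δ hΔ => ?_⟩
    have h1 := (key1 N₁ n hn hnN Δ hΔ).trans (hB Δ hΔ (N₁ + 2))
    have h2 : Real.exp (-(Δ * υ)) ^ (N₁ + 2) ≤ qs ^ (N₁ + 2) := hqpow Δ hΔ _
    have h3 : qs ^ (N₁ + 2) ≤ qs ^ M :=
      pow_le_pow_of_le_one hqs0.le hqs1.le (by omega)
    have h4 : c ^ 2 * qs ^ M < c ^ 2 * (δ / c ^ 2) :=
      mul_lt_mul_of_pos_left hM hc2
    have h5 : c ^ 2 * (δ / c ^ 2) = δ := by field_simp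
    have h6 := mul_le_mul_of_nonneg_left (h2.trans h3) hc2.le
    linarith
  · -- uniform bound on θ² and θ³
    refine ⟨c ^ 2 * qs, mul_pos hc2 hqs0, fun N₁ n hn hnN Δ hΔ => ⟨?_, ?_⟩⟩
    · have h1 := (key2 n hn Δ hΔ).trans (hB Δ hΔ 1)
      have h2 : Real.exp (-(Δ * υ)) ^ 1 ≤ qs ^ 1 := hqpow Δ hΔ 1
      rw [pow_one] at h1 h2
      have h3 := mul_le_mul_of_nonneg_left h2 hc2.le
      linarith
    · have h1 := (key3 N₁ n hn Δ hΔ).trans (hB Δ hΔ 1)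
      have h2 : Real.exp (-(Δ * υ)) ^ 1 ≤ qs ^ 1 := hqpow Δ hΔ 1
      rw [pow_one] at h1 h2
      have h3 := mul_le_mul_of_nonneg_left h2 hc2.le
      linarith
  · -- uniform bound on θ¹
    refine ⟨c ^ 2, hc2, fun N₁ n hn hnN Δ hΔ => ?_⟩
    have h1 := (key1 N₁ n hn hnN Δ hΔ).trans (hB Δ hΔ (N₁ + 2))
    have h2 : Real.exp (-(Δ * υ)) ^ (N₁ + 2) ≤ 1 :=
      pow_le_one₀ (Real.exp_pos _).le (by
        apply Real.exp_le_one_iff.mpr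
        nlinarith)
    have h3 := mul_le_mul_of_nonneg_left h2 hc2.le
    rw [mul_one] at h3
    linarith
  · -- Δ → ∞ decay
    intro δ hδ
    refine ⟨max Δs ((Real.log (c ^ 2 / δ) + 1) / υ), fun Δ hΔ0 N₁ n hn hnN => ?_⟩
    have hΔ : Δs ≤ Δ := le_trans (le_max_left _ _) hΔ0
    have hΔ' : (Real.log (c ^ 2 / δ) + 1) / υ ≤ Δ := le_trans (le_max_right _ _) hΔ0
    have hΔυ : Real.log (c ^ 2 / δ) + 1 ≤ Δ * υ := by
      rw [div_le_iff₀ hυ] at hΔ'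
      linarith
    have hqlt : Real.exp (-(Δ * υ)) < δ / c ^ 2 := by
      have hpos : 0 < δ / c ^ 2 := div_pos hδ hc2
      have : -(Δ * υ) < Real.log (δ / c ^ 2) := by
        rw [Real.log_div hδ.ne' hc2.ne']
        rw [Real.log_div hc2.ne' hδ.ne'] at hΔυ
        have := Real.log_le_sub_one_of_pos (show (0:ℝ) < c ^ 2 by positivity)
        linarith [hΔυ]
      calc Real.exp (-(Δ * υ)) < Real.exp (Real.log (δ / c ^ 2)) :=
            Real.exp_lt_exp.mpr this
        _ = δ / c ^ 2 := Real.exp_log hpos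
    have hq0 : (0 : ℝ) < Real.exp (-(Δ * υ)) := Real.exp_pos _
    have hq1 : Real.exp (-(Δ * υ)) ≤ 1 :=
      Real.exp_le_one_iff.mpr (by nlinarith)
    have hfinal : c ^ 2 * Real.exp (-(Δ * υ)) < δ := by
      have := mul_lt_mul_of_pos_left hqlt hc2
      have heq : c ^ 2 * (δ / c ^ 2) = δ := by field_simp
      linarith
    refine ⟨?_, ?_, ?_⟩
    · have h1 := (key1 N₁ n hn hnN Δ hΔ).trans (hB Δ hΔ (N₁ + 2))
      have h2 : Real.exp (-(Δ * υ)) ^ (N₁ + 2) ≤ Real.exp (-(Δ * υ)) ^ 1 :=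
        pow_le_pow_of_le_one hq0.le hq1 (by omega)
      rw [pow_one] at h2
      have h3 := mul_le_mul_of_nonneg_left h2 hc2.le
      linarith
    · have h1 := (key2 n hn Δ hΔ).trans (hB Δ hΔ 1)
      rw [pow_one] at h1
      linarith
    · have h1 := (key3 N₁ n hn Δ hΔ).trans (hB Δ hΔ 1)
      rw [pow_one] at h1
      linarith
end

section
/- For every Δ > 0, every N₁ ∈ ℕ, and every n ∈ {1,…,N₁}: L_n(φ_{N₁+1})² = exp(−2·Δ·Σ_{j=n+1}^{N₁}(λ_j − λ_n) − 2·θ¹_{n,Δ,N₁} + 2·θ²_{n,Δ} + 2·θ³_{n,Δ,N₁}). Moreover, for every Δ* > 0 and every η ∈ (0,1] there exist C > 0 and N₀ ∈ ℕ such that for all Δ ≥ Δ*, all N₁ ≥ N₀, and all n ∈ {1,…,⌊η·N₁⌋}: L_n(φ_{N₁+1})² ≤ C·exp(−2·υ·Δ·Ψ(⌊η·N₁⌋; N₁)). -/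
open MeasureTheory

/-- `Ψ(n; N₁) = Σ_{j=n+1}^{N₁} (j² − n²)`. -/
noncomputable def Psi (n N₁ : ℕ) : ℝ :=
  ∑ j ∈ Finset.Icc (n + 1) N₁, ((j : ℝ) ^ 2 - (n : ℝ) ^ 2)

lemma exp_neg_gfun {x : ℝ} (hx : 0 < x) : Real.exp (-(gfun x)) = 1 - Real.exp (-x) := by
  unfold gfun; rw [neg_neg, Real.exp_log (one_sub_exp_pos hx)]

lemma gfun_le {c x : ℝ} (hc : 0 < c) (hx : c ≤ x) :
    gfun x ≤ (1 - Real.exp (-c))⁻¹ * Real.exp (-x) := by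
  have hx0 : 0 < x := lt_of_lt_of_le hc hx
  have h1 : 0 < 1 - Real.exp (-x) := one_sub_exp_pos hx0
  have h2 : 0 < 1 - Real.exp (-c) := one_sub_exp_pos hc
  have h3 : Real.exp (-x) ≤ Real.exp (-c) := Real.exp_le_exp.mpr (by linarith)
  have key : gfun x ≤ (1 - Real.exp (-x))⁻¹ * Real.exp (-x) := by
    unfold gfun
    have hlog : Real.log ((1 - Real.exp (-x))⁻¹) ≤ (1 - Real.exp (-x))⁻¹ - 1 :=
      Real.log_le_sub_one_of_pos (by positivity)
    rw [Real.log_inv] at hlog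
    have heq : (1 - Real.exp (-x))⁻¹ - 1 = (1 - Real.exp (-x))⁻¹ * Real.exp (-x) := by
      field_simp
      ring
    linarith [heq ▸ hlog]
  have hmono : (1 - Real.exp (-x))⁻¹ ≤ (1 - Real.exp (-c))⁻¹ :=
    inv_anti₀ h2 (by linarith)
  have := Real.exp_pos (-x)
  nlinarith

lemma geom_icc {r : ℝ} (h0 : 0 ≤ r) (h1 : r < 1) (M : ℕ) :
    ∑ k ∈ Finset.Icc 1 M, r ^ k ≤ r / (1 - r) := by
  have h1r : 0 < 1 - r := by linarith
  have hins : Finset.range (M + 1) = insert 0 (Finset.Icc 1 M) := by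
    ext k; simp [Finset.mem_range, Finset.mem_Icc]; omega
  have h0notin : (0 : ℕ) ∉ Finset.Icc 1 M := by simp
  have hsum : ∑ k ∈ Finset.range (M + 1), r ^ k = 1 + ∑ k ∈ Finset.Icc 1 M, r ^ k := by
    rw [hins, Finset.sum_insert h0notin, pow_zero]
  have hg : ∑ k ∈ Finset.range (M + 1), r ^ k = (r ^ (M + 1) - 1) / (r - 1) :=
    geom_sum_eq (by linarith) (M + 1)
  have hpow : 0 ≤ r ^ (M + 1) := pow_nonneg h0 _
  have heq : (r ^ (M + 1) - 1) / (r - 1) = (1 - r ^ (M + 1)) / (1 - r) := by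
    rw [← neg_div_neg_eq]; ring_nf
  have hkey : ∑ k ∈ Finset.Icc 1 M, r ^ k = (1 - r ^ (M + 1)) / (1 - r) - 1 := by
    rw [← heq, ← hg, hsum]; ring
  rw [hkey, div_sub' (ne_of_gt h1r), div_le_div_iff₀ h1r h1r]
  nlinarith

lemma sum_pow_le {r : ℝ} (h0 : 0 ≤ r) (h1 : r < 1) (s : Finset ℕ) (e : ℕ → ℕ)
    (hinj : ∀ x ∈ s, ∀ y ∈ s, e x = e y → x = y) (h1e : ∀ j ∈ s, 1 ≤ e j)
    (M : ℕ) (hM : ∀ j ∈ s, e j ≤ M) :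
    ∑ j ∈ s, r ^ (e j) ≤ r / (1 - r) := by
  have h2 : ∑ j ∈ s, r ^ (e j) = ∑ k ∈ s.image e, r ^ k := (Finset.sum_image hinj).symm
  rw [h2]
  refine le_trans (Finset.sum_le_sum_of_subset_of_nonneg ?_ ?_) (geom_icc h0 h1 M)
  · intro k hk
    simp only [Finset.mem_image] at hk
    obtain ⟨j, hj, rfl⟩ := hk
    simp only [Finset.mem_Icc]
    exact ⟨h1e j hj, hM j hj⟩
  · intro k _ _; positivity

lemma phi_sub (lam : ℕ → ℝ) (Δ : ℝ) (hΔ : 0 < Δ) {a b : ℕ} (h : lam a < lam b) :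
    phi lam Δ a - phi lam Δ b = Real.exp (-Δ * lam a - gfun (Δ * (lam b - lam a))) := by
  have hpos : 0 < Δ * (lam b - lam a) := mul_pos hΔ (by linarith)
  unfold phi
  rw [show -Δ * lam a - gfun (Δ * (lam b - lam a)) =
      (-Δ * lam a) + (-(gfun (Δ * (lam b - lam a)))) from by ring,
    Real.exp_add, exp_neg_gfun hpos, mul_sub, mul_one, ← Real.exp_add]
  congr 2
  ring

/-- The exact identity, as a standalone lemma. -/
lemma lag_sq (lam : ℕ → ℝ)
    (hmono : ∀ n m : ℕ, 1 ≤ n → n < m → lam n < lam m)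
    (Δ : ℝ) (hΔ : 0 < Δ) (N₁ n : ℕ) (hn : 1 ≤ n) (hnN : n ≤ N₁) :
    (Lag lam Δ N₁ n (phi lam Δ (N₁ + 1))) ^ 2 =
      Real.exp (-2 * Δ * (∑ j ∈ Finset.Icc (n + 1) N₁, (lam j - lam n)) -
        2 * theta1 lam Δ N₁ n + 2 * theta2 lam Δ n + 2 * theta3 lam Δ N₁ n) := by
  classical
  set z := phi lam Δ (N₁ + 1) with hz
  set f : ℕ → ℝ := fun j =>
    (-2) * gfun (Δ * (lam (N₁ + 1) - lam j)) +
    (if j < n then 2 * gfun (Δ * (lam n - lam j))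
     else 2 * gfun (Δ * (lam j - lam n)) + (-2 * Δ) * (lam j - lam n)) with hf
  have hfactor : ∀ j ∈ (Finset.Icc 1 N₁).erase n,
      ((z - phi lam Δ j) / (phi lam Δ n - phi lam Δ j)) ^ 2 = Real.exp (f j) := by
    intro j hj
    obtain ⟨hjn, hj'⟩ := Finset.mem_erase.mp hj
    obtain ⟨hj1, hjN⟩ := Finset.mem_Icc.mp hj'
    have hnum : z - phi lam Δ j =
        -(Real.exp (-Δ * lam j - gfun (Δ * (lam (N₁ + 1) - lam j)))) := by
      rw [← phi_sub lam Δ hΔ (hmono j (N₁ + 1) hj1 (by omega))]; ring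
    rcases lt_or_gt_of_ne hjn with hlt | hgt
    · -- j < n
      have hden : phi lam Δ n - phi lam Δ j =
          -(Real.exp (-Δ * lam j - gfun (Δ * (lam n - lam j)))) := by
        rw [← phi_sub lam Δ hΔ (hmono j n hj1 hlt)]; ring
      rw [hnum, hden, neg_div_neg_eq, div_pow, sq, sq, ← Real.exp_add, ← Real.exp_add,
        ← Real.exp_sub]
      have : f j = (-2) * gfun (Δ * (lam (N₁ + 1) - lam j)) +
          2 * gfun (Δ * (lam n - lam j)) := by
        rw [hf]; simp only [if_pos hlt]
      rw [this]
      congr 1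
      ring
    · -- n < j
      have hden : phi lam Δ n - phi lam Δ j =
          Real.exp (-Δ * lam n - gfun (Δ * (lam j - lam n))) :=
        phi_sub lam Δ hΔ (hmono n j hn hgt)
      rw [hnum, hden, div_pow, neg_sq, sq, sq, ← Real.exp_add, ← Real.exp_add,
        ← Real.exp_sub]
      have : f j = (-2) * gfun (Δ * (lam (N₁ + 1) - lam j)) +
          (2 * gfun (Δ * (lam j - lam n)) + (-2 * Δ) * (lam j - lam n)) := by
        rw [hf]; simp only [if_neg (not_lt.mpr (le_of_lt hgt))]
      rw [this]
      congr 1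
      ring
  have hprod : (Lag lam Δ N₁ n z) ^ 2 =
      Real.exp (∑ j ∈ (Finset.Icc 1 N₁).erase n, f j) := by
    rw [Lag, ← Finset.prod_pow, Real.exp_sum]
    exact Finset.prod_congr rfl hfactor
  rw [hprod]
  congr 1
  -- compute the sum of f
  have hsum_add : ∑ j ∈ (Finset.Icc 1 N₁).erase n, f j =
      (∑ j ∈ (Finset.Icc 1 N₁).erase n, (-2) * gfun (Δ * (lam (N₁ + 1) - lam j))) +
      ∑ j ∈ (Finset.Icc 1 N₁).erase n,
        (if j < n then 2 * gfun (Δ * (lam n - lam j))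
         else 2 * gfun (Δ * (lam j - lam n)) + (-2 * Δ) * (lam j - lam n)) := by
    rw [← Finset.sum_add_distrib]
  have h1 : ∑ j ∈ (Finset.Icc 1 N₁).erase n, (-2) * gfun (Δ * (lam (N₁ + 1) - lam j)) =
      (-2) * theta1 lam Δ N₁ n := by
    rw [theta1, Finset.mul_sum]
  have hsplit : (Finset.Icc 1 N₁).erase n = Finset.Icc 1 (n - 1) ∪ Finset.Icc (n + 1) N₁ := by
    ext j
    simp only [Finset.mem_erase, Finset.mem_Icc, Finset.mem_union]
    omega
  have hdisj : Disjoint (Finset.Icc 1 (n - 1)) (Finset.Icc (n + 1) N₁) := by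
    rw [Finset.disjoint_left]
    intro j hj1 hj2
    simp only [Finset.mem_Icc] at hj1 hj2
    omega
  have h2 : ∑ j ∈ (Finset.Icc 1 N₁).erase n,
      (if j < n then 2 * gfun (Δ * (lam n - lam j))
       else 2 * gfun (Δ * (lam j - lam n)) + (-2 * Δ) * (lam j - lam n)) =
      2 * theta2 lam Δ n +
      (2 * theta3 lam Δ N₁ n + (-2 * Δ) * ∑ j ∈ Finset.Icc (n + 1) N₁, (lam j - lam n)) := by
    rw [hsplit, Finset.sum_union hdisj]
    congr 1
    · rw [theta2, Finset.mul_sum]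
      apply Finset.sum_congr rfl
      intro j hj
      obtain ⟨hj1, hj2⟩ := Finset.mem_Icc.mp hj
      rw [if_pos (by omega)]
    · rw [theta3, Finset.mul_sum, Finset.mul_sum, ← Finset.sum_add_distrib]
      apply Finset.sum_congr rfl
      intro j hj
      obtain ⟨hj1, hj2⟩ := Finset.mem_Icc.mp hj
      rw [if_neg (by omega)]
  rw [hsum_add, h1, h2]
  ring


/-- Part 2, standalone, with an abstract cut index `m`. -/
lemma lag_bound (lam : ℕ → ℝ) (υ Υ : ℝ) (hυ : 0 < υ) (hυΥ : υ ≤ Υ)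
    (hmono : ∀ n m : ℕ, 1 ≤ n → n < m → lam n < lam m)
    (hgap : ∀ n m : ℕ, 1 ≤ n → n ≤ m →
      υ * ((m : ℝ) ^ 2 - (n : ℝ) ^ 2) ≤ lam m - lam n ∧
      lam m - lam n ≤ Υ * ((m : ℝ) ^ 2 - (n : ℝ) ^ 2))
    (Δs : ℝ) (hΔs : 0 < Δs) :
    ∃ C : ℝ, 0 < C ∧
      ∀ Δ : ℝ, Δs ≤ Δ → ∀ N₁ n m : ℕ, 1 ≤ n → n ≤ m → m ≤ N₁ →
        (Lag lam Δ N₁ n (phi lam Δ (N₁ + 1))) ^ 2 ≤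
          C * Real.exp (-2 * υ * Δ * Psi m N₁) := by
  obtain ⟨c, hc⟩ : ∃ c : ℝ, c = Δs * υ := ⟨_, rfl⟩
  have hcpos : 0 < c := hc ▸ mul_pos hΔs hυ
  obtain ⟨r, hr⟩ : ∃ r : ℝ, r = Real.exp (-c) := ⟨_, rfl⟩
  have hr0 : 0 ≤ r := hr ▸ le_of_lt (Real.exp_pos _)
  have hr1 : r < 1 := by rw [hr, Real.exp_lt_one_iff]; linarith
  have h1r : 0 < 1 - r := by linarith
  obtain ⟨K, hK⟩ : ∃ K : ℝ, K = (1 - r)⁻¹ := ⟨_, rfl⟩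
  have hKpos : 0 < K := by rw [hK]; positivity
  obtain ⟨B, hB⟩ : ∃ B : ℝ, B = K * (r / (1 - r)) := ⟨_, rfl⟩
  have hBnn : 0 ≤ B := by rw [hB]; positivity
  refine ⟨Real.exp (4 * B), Real.exp_pos _, ?_⟩
  intro Δ hΔ N₁ n m hn hnm hmN
  have hΔ0 : 0 < Δ := lt_of_lt_of_le hΔs hΔ
  have hnN : n ≤ N₁ := le_trans hnm hmN
  rw [lag_sq lam hmono Δ hΔ0 N₁ n hn hnN]
  rw [← Real.exp_add, Real.exp_le_exp]
  -- pointwise bound on the g-terms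
  have hgbound : ∀ a b : ℕ, 1 ≤ a → a < b →
      gfun (Δ * (lam b - lam a)) ≤ K * r ^ (b - a) := by
    intro a b ha hab
    have hgap' := (hgap a b ha (le_of_lt hab)).1
    have hcast : ((b - a : ℕ) : ℝ) = (b : ℝ) - (a : ℝ) := by
      rw [Nat.cast_sub (le_of_lt hab)]
    have hsq : ((b - a : ℕ) : ℝ) ≤ (b : ℝ) ^ 2 - (a : ℝ) ^ 2 := by
      rw [hcast]
      have ha1 : (1 : ℝ) ≤ (a : ℝ) := by exact_mod_cast ha
      have hab' : (a : ℝ) < (b : ℝ) := by exact_mod_cast hab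
      nlinarith
    have h00 : (0:ℝ) ≤ ((b - a : ℕ) : ℝ) := by positivity
    have hx : c * ((b - a : ℕ) : ℝ) ≤ Δ * (lam b - lam a) := by
      have h1 : υ * ((b - a : ℕ) : ℝ) ≤ υ * ((b : ℝ) ^ 2 - (a : ℝ) ^ 2) :=
        mul_le_mul_of_nonneg_left hsq (le_of_lt hυ)
      have h3 : 0 ≤ lam b - lam a := by nlinarith
      calc c * ((b - a : ℕ) : ℝ) = Δs * (υ * ((b - a : ℕ) : ℝ)) := by rw [hc]; ring
        _ ≤ Δs * (lam b - lam a) := by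
            apply mul_le_mul_of_nonneg_left _ (le_of_lt hΔs)
            linarith
        _ ≤ Δ * (lam b - lam a) := mul_le_mul_of_nonneg_right hΔ h3
    have hk1 : (1 : ℝ) ≤ ((b - a : ℕ) : ℝ) := by
      have : 1 ≤ b - a := by omega
      exact_mod_cast this
    have hcx : c ≤ Δ * (lam b - lam a) := by nlinarith
    calc gfun (Δ * (lam b - lam a)) ≤ (1 - Real.exp (-c))⁻¹ * Real.exp (-(Δ * (lam b - lam a))) :=
          gfun_le hcpos hcx
      _ = K * Real.exp (-(Δ * (lam b - lam a))) := by rw [hK, hr]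
      _ ≤ K * Real.exp (-(c * ((b - a : ℕ) : ℝ))) := by
          apply mul_le_mul_of_nonneg_left _ (le_of_lt hKpos)
          exact Real.exp_le_exp.mpr (by linarith)
      _ = K * r ^ (b - a) := by
          rw [hr, ← Real.exp_nat_mul]
          congr 1
          ring
  -- theta2 ≤ B
  have ht2 : theta2 lam Δ n ≤ B := by
    rw [theta2, hB]
    calc ∑ j ∈ Finset.Icc 1 (n - 1), gfun (Δ * (lam n - lam j))
        ≤ ∑ j ∈ Finset.Icc 1 (n - 1), K * r ^ (n - j) := by
          apply Finset.sum_le_sum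
          intro j hj
          obtain ⟨hj1, hj2⟩ := Finset.mem_Icc.mp hj
          exact hgbound j n hj1 (by omega)
      _ = K * ∑ j ∈ Finset.Icc 1 (n - 1), r ^ (n - j) := by rw [Finset.mul_sum]
      _ ≤ K * (r / (1 - r)) := by
          apply mul_le_mul_of_nonneg_left _ (le_of_lt hKpos)
          refine sum_pow_le hr0 hr1 _ (fun j => n - j) ?_ ?_ n ?_
          · intro x hx y hy hxy
            simp only [Finset.mem_Icc] at hx hy
            omega
          · intro j hj
            simp only [Finset.mem_Icc] at hj
            omega
          · intro j hj
            simp only [Finset.mem_Icc] at hj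
            omega
  -- theta3 ≤ B
  have ht3 : theta3 lam Δ N₁ n ≤ B := by
    rw [theta3, hB]
    calc ∑ j ∈ Finset.Icc (n + 1) N₁, gfun (Δ * (lam j - lam n))
        ≤ ∑ j ∈ Finset.Icc (n + 1) N₁, K * r ^ (j - n) := by
          apply Finset.sum_le_sum
          intro j hj
          obtain ⟨hj1, hj2⟩ := Finset.mem_Icc.mp hj
          exact hgbound n j hn (by omega)
      _ = K * ∑ j ∈ Finset.Icc (n + 1) N₁, r ^ (j - n) := by rw [Finset.mul_sum]
      _ ≤ K * (r / (1 - r)) := by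
          apply mul_le_mul_of_nonneg_left _ (le_of_lt hKpos)
          refine sum_pow_le hr0 hr1 _ (fun j => j - n) ?_ ?_ N₁ ?_
          · intro x hx y hy hxy
            simp only [Finset.mem_Icc] at hx hy
            omega
          · intro j hj
            simp only [Finset.mem_Icc] at hj
            omega
          · intro j hj
            simp only [Finset.mem_Icc] at hj
            omega
  -- theta1 ≥ 0
  have ht1 : 0 ≤ theta1 lam Δ N₁ n := by
    rw [theta1]
    apply Finset.sum_nonneg
    intro j hj
    obtain ⟨hjn, hj'⟩ := Finset.mem_erase.mp hj
    obtain ⟨hj1, hj2⟩ := Finset.mem_Icc.mp hj'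
    apply gfun_nonneg
    have := hmono j (N₁ + 1) hj1 (by omega)
    exact mul_pos hΔ0 (by linarith)
  -- S ≥ υ * Psi n N₁
  have hS : υ * Psi n N₁ ≤ ∑ j ∈ Finset.Icc (n + 1) N₁, (lam j - lam n) := by
    rw [Psi, Finset.mul_sum]
    apply Finset.sum_le_sum
    intro j hj
    obtain ⟨hj1, hj2⟩ := Finset.mem_Icc.mp hj
    exact (hgap n j hn (by omega)).1
  -- Psi m N₁ ≤ Psi n N₁
  have hPsiNonneg : ∀ k : ℕ, ∀ j ∈ Finset.Icc (k + 1) N₁, (0:ℝ) ≤ (j : ℝ) ^ 2 - (k : ℝ) ^ 2 := by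
    intro k j hj
    obtain ⟨hj1, hj2⟩ := Finset.mem_Icc.mp hj
    have hkj : (k : ℝ) ≤ (j : ℝ) := by exact_mod_cast (by omega : k ≤ j)
    have hk0 : (0:ℝ) ≤ (k : ℝ) := Nat.cast_nonneg k
    have := pow_le_pow_left₀ hk0 hkj 2
    linarith
  have hPsi : Psi m N₁ ≤ Psi n N₁ := by
    rw [Psi, Psi]
    calc ∑ j ∈ Finset.Icc (m + 1) N₁, ((j : ℝ) ^ 2 - (m : ℝ) ^ 2)
        ≤ ∑ j ∈ Finset.Icc (m + 1) N₁, ((j : ℝ) ^ 2 - (n : ℝ) ^ 2) := by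
          apply Finset.sum_le_sum
          intro j hj
          have hnm' : (n : ℝ) ≤ (m : ℝ) := by exact_mod_cast hnm
          have hn0 : (0:ℝ) ≤ (n : ℝ) := Nat.cast_nonneg n
          have := pow_le_pow_left₀ hn0 hnm' 2
          linarith
      _ ≤ ∑ j ∈ Finset.Icc (n + 1) N₁, ((j : ℝ) ^ 2 - (n : ℝ) ^ 2) := by
          apply Finset.sum_le_sum_of_subset_of_nonneg
          · intro j hj
            simp only [Finset.mem_Icc] at *
            omega
          · intro j hj _
            exact hPsiNonneg n j hj
  have hPsim0 : 0 ≤ Psi m N₁ := Finset.sum_nonneg (hPsiNonneg m)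
  have hDS : υ * Δ * Psi m N₁ ≤ Δ * ∑ j ∈ Finset.Icc (n + 1) N₁, (lam j - lam n) := by
    have h1 : υ * Psi m N₁ ≤ υ * Psi n N₁ := mul_le_mul_of_nonneg_left hPsi (le_of_lt hυ)
    have h2 : υ * Psi m N₁ ≤ ∑ j ∈ Finset.Icc (n + 1) N₁, (lam j - lam n) :=
      le_trans h1 hS
    calc υ * Δ * Psi m N₁ = Δ * (υ * Psi m N₁) := by ring
      _ ≤ Δ * ∑ j ∈ Finset.Icc (n + 1) N₁, (lam j - lam n) :=
          mul_le_mul_of_nonneg_left h2 (le_of_lt hΔ0)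
  linarith

theorem stmt16 (lam : ℕ → ℝ) (υ Υ : ℝ) (hυ : 0 < υ) (hυΥ : υ ≤ Υ)
    (hmono : ∀ n m : ℕ, 1 ≤ n → n < m → lam n < lam m)
    (hgap : ∀ n m : ℕ, 1 ≤ n → n ≤ m →
      υ * ((m : ℝ) ^ 2 - (n : ℝ) ^ 2) ≤ lam m - lam n ∧
      lam m - lam n ≤ Υ * ((m : ℝ) ^ 2 - (n : ℝ) ^ 2)) :
    -- exact identity for L_n(φ_{N₁+1})²
    (∀ Δ : ℝ, 0 < Δ → ∀ N₁ n : ℕ, 1 ≤ n → n ≤ N₁ →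
      (Lag lam Δ N₁ n (phi lam Δ (N₁ + 1))) ^ 2 =
        Real.exp (-2 * Δ * (∑ j ∈ Finset.Icc (n + 1) N₁, (lam j - lam n)) -
          2 * theta1 lam Δ N₁ n + 2 * theta2 lam Δ n + 2 * theta3 lam Δ N₁ n)) ∧
    -- asymptotic upper bound
    (∀ Δs : ℝ, 0 < Δs → ∀ η : ℝ, 0 < η → η ≤ 1 →
      ∃ C : ℝ, 0 < C ∧ ∃ N₀ : ℕ,
        ∀ Δ : ℝ, Δs ≤ Δ → ∀ N₁ : ℕ, N₀ ≤ N₁ →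
          ∀ n : ℕ, 1 ≤ n → n ≤ ⌊η * (N₁ : ℝ)⌋₊ →
            (Lag lam Δ N₁ n (phi lam Δ (N₁ + 1))) ^ 2 ≤
              C * Real.exp (-2 * υ * Δ * Psi ⌊η * (N₁ : ℝ)⌋₊ N₁)) := by
  constructor
  · intro Δ hΔ N₁ n hn hnN
    exact lag_sq lam hmono Δ hΔ N₁ n hn hnN
  · intro Δs hΔs η hη hη1
    obtain ⟨C, hC, hbound⟩ := lag_bound lam υ Υ hυ hυΥ hmono hgap Δs hΔs
    refine ⟨C, hC, 1, ?_⟩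
    intro Δ hΔ N₁ hN₁ n hn hnm
    have hmN : ⌊η * (N₁ : ℝ)⌋₊ ≤ N₁ := by
      calc ⌊η * (N₁ : ℝ)⌋₊ ≤ ⌊(N₁ : ℝ)⌋₊ := by
            apply Nat.floor_le_floor
            calc η * (N₁ : ℝ) ≤ 1 * (N₁ : ℝ) :=
                  mul_le_mul_of_nonneg_right hη1 (by positivity)
              _ = (N₁ : ℝ) := one_mul _
        _ = N₁ := Nat.floor_natCast N₁
    exact hbound Δ hΔ N₁ n ⌊η * (N₁ : ℝ)⌋₊ hn hnm hmN
end

section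
/- For every Δ > 0, every N₁ ∈ ℕ, and every n ∈ {1,…,N₁}: (φ_n − φ_{N₁+1}) · Σ_{k∈{1,…,N₁}, k≠n} 1/|φ_n − φ_k| ≤ (N₁ − 1) · ( 1/(exp(Δ·υ) − 1) + exp(3·Δ·υ)/(exp(3·Δ·υ) − 1) ). In particular, |(φ_{N₁+1} − φ_n)·L_n'(φ_n)| is bounded by the same right-hand side, where L_n'(φ_n) = Σ_{k≤N₁, k≠n} 1/(φ_n − φ_k). -/
set_option maxHeartbeats 1000000

theorem stmt19 (lam : ℕ → ℝ) (υ Υ : ℝ) (hυ : 0 < υ) (hυΥ : υ ≤ Υ)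
    (hmono : ∀ n m : ℕ, 1 ≤ n → n < m → lam n < lam m)
    (hgap : ∀ n m : ℕ, 1 ≤ n → n ≤ m →
      υ * ((m : ℝ) ^ 2 - (n : ℝ) ^ 2) ≤ lam m - lam n ∧
      lam m - lam n ≤ Υ * ((m : ℝ) ^ 2 - (n : ℝ) ^ 2))
    (Δ : ℝ) (hΔ : 0 < Δ) (N₁ : ℕ) (hN₁ : 1 ≤ N₁)
    (n : ℕ) (hn1 : 1 ≤ n) (hnN : n ≤ N₁) :
    (phi lam Δ n - phi lam Δ (N₁ + 1)) *
        (∑ k ∈ (Finset.Icc 1 N₁).erase n, 1 / |phi lam Δ n - phi lam Δ k|) ≤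
      ((N₁ : ℝ) - 1) *
        (1 / (Real.exp (Δ * υ) - 1) +
          Real.exp (3 * Δ * υ) / (Real.exp (3 * Δ * υ) - 1)) ∧
    |(phi lam Δ (N₁ + 1) - phi lam Δ n) * LagD lam Δ N₁ n| ≤
      ((N₁ : ℝ) - 1) *
        (1 / (Real.exp (Δ * υ) - 1) +
          Real.exp (3 * Δ * υ) / (Real.exp (3 * Δ * υ) - 1)) := by
  set A : ℝ := 1 / (Real.exp (Δ * υ) - 1) with hA
  set B : ℝ := Real.exp (3 * Δ * υ) / (Real.exp (3 * Δ * υ) - 1) with hB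
  have hE1 : 1 < Real.exp (Δ * υ) := by
    have : 0 < Δ * υ := mul_pos hΔ hυ
    calc (1:ℝ) = Real.exp 0 := (Real.exp_zero).symm
    _ < Real.exp (Δ * υ) := Real.exp_lt_exp.mpr this
  have hE3 : 1 < Real.exp (3 * Δ * υ) := by
    have : 0 < 3 * Δ * υ := by positivity
    calc (1:ℝ) = Real.exp 0 := (Real.exp_zero).symm
    _ < Real.exp (3 * Δ * υ) := Real.exp_lt_exp.mpr this
  have hApos : 0 < A := by
    rw [hA]; exact div_pos one_pos (by linarith)
  have hBpos : 0 < B := by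
    have := Real.exp_pos (3 * Δ * υ)
    rw [hB]; exact div_pos (by linarith) (by linarith)
  have hφpos : ∀ m : ℕ, 0 < phi lam Δ m := fun m => Real.exp_pos _
  have hφlt : ∀ a b : ℕ, 1 ≤ a → a < b → phi lam Δ b < phi lam Δ a := by
    intro a b ha hab
    have := hmono a b ha hab
    exact Real.exp_lt_exp.mpr (by nlinarith)
  have hd : 0 < phi lam Δ n - phi lam Δ (N₁ + 1) := by
    have := hφlt n (N₁ + 1) hn1 (by omega)
    linarith
  have hdle : phi lam Δ n - phi lam Δ (N₁ + 1) ≤ phi lam Δ n := by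
    have := hφpos (N₁ + 1); linarith
  -- key per-term bound
  have key : ∀ k ∈ (Finset.Icc 1 N₁).erase n,
      (phi lam Δ n - phi lam Δ (N₁ + 1)) * (1 / |phi lam Δ n - phi lam Δ k|) ≤ A + B := by
    intro k hk
    obtain ⟨hkn, hkI⟩ := Finset.mem_erase.mp hk
    obtain ⟨hk1, hkN⟩ := Finset.mem_Icc.mp hkI
    rcases lt_or_gt_of_ne hkn with hlt | hgt
    · -- k < n : bound by A
      have hne : 0 < phi lam Δ k - phi lam Δ n := by
        have := hφlt k n hk1 hlt; linarith
      have habs : |phi lam Δ n - phi lam Δ k| = phi lam Δ k - phi lam Δ n := by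
        rw [abs_of_neg (by linarith)]; ring
      rw [habs]
      have hbound : (phi lam Δ n - phi lam Δ (N₁ + 1)) * (1 / (phi lam Δ k - phi lam Δ n)) ≤ A := by
        rw [mul_one_div, hA, div_le_div_iff₀ hne (by linarith)]
        have hgk := (hgap k n hk1 hlt.le).1
        have hsq : (1:ℝ) ≤ (n:ℝ)^2 - (k:ℝ)^2 := by
          have : (k:ℝ) + 1 ≤ (n:ℝ) := by exact_mod_cast hlt
          have hk0 : (0:ℝ) ≤ (k:ℝ) := Nat.cast_nonneg k
          nlinarith
        have hlam : υ ≤ lam n - lam k := by nlinarith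
        have hexp : phi lam Δ n * Real.exp (Δ * υ) ≤ phi lam Δ k := by
          unfold phi
          rw [← Real.exp_add]
          apply Real.exp_le_exp.mpr
          have := mul_le_mul_of_nonneg_left hlam hΔ.le
          linarith
        have h1 : (phi lam Δ n - phi lam Δ (N₁ + 1)) * (Real.exp (Δ * υ) - 1) ≤
            phi lam Δ n * (Real.exp (Δ * υ) - 1) :=
          mul_le_mul_of_nonneg_right hdle (by linarith)
        nlinarith [h1, hexp]
      linarith
    · -- k > n : bound by B
      have hne : 0 < phi lam Δ n - phi lam Δ k := by
        have := hφlt n k hn1 hgt; linarith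
      have habs : |phi lam Δ n - phi lam Δ k| = phi lam Δ n - phi lam Δ k :=
        abs_of_pos hne
      rw [habs]
      have hbound : (phi lam Δ n - phi lam Δ (N₁ + 1)) * (1 / (phi lam Δ n - phi lam Δ k)) ≤ B := by
        rw [mul_one_div, hB, div_le_div_iff₀ hne (by linarith)]
        have hgk := (hgap n k hn1 hgt.le).1
        have hsq : (3:ℝ) ≤ (k:ℝ)^2 - (n:ℝ)^2 := by
          have h1 : (n:ℝ) + 1 ≤ (k:ℝ) := by exact_mod_cast hgt
          have h2 : (1:ℝ) ≤ (n:ℝ) := by exact_mod_cast hn1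
          nlinarith
        have hlam : 3 * υ ≤ lam k - lam n := by nlinarith
        have hexp : phi lam Δ k * Real.exp (3 * Δ * υ) ≤ phi lam Δ n := by
          unfold phi
          rw [← Real.exp_add]
          apply Real.exp_le_exp.mpr
          have := mul_le_mul_of_nonneg_left hlam hΔ.le
          linarith
        have h1 : (phi lam Δ n - phi lam Δ (N₁ + 1)) * (Real.exp (3 * Δ * υ) - 1) ≤
            phi lam Δ n * (Real.exp (3 * Δ * υ) - 1) :=
          mul_le_mul_of_nonneg_right hdle (by linarith)
        nlinarith [h1, hexp]
      linarith
  -- card of index set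
  have hcard : ((Finset.Icc 1 N₁).erase n).card = N₁ - 1 := by
    rw [Finset.card_erase_of_mem (Finset.mem_Icc.mpr ⟨hn1, hnN⟩), Nat.card_Icc]
    omega
  have hcardR : (((Finset.Icc 1 N₁).erase n).card : ℝ) = (N₁ : ℝ) - 1 := by
    rw [hcard, Nat.cast_sub hN₁, Nat.cast_one]
  have main : (phi lam Δ n - phi lam Δ (N₁ + 1)) *
      (∑ k ∈ (Finset.Icc 1 N₁).erase n, 1 / |phi lam Δ n - phi lam Δ k|) ≤
      ((N₁ : ℝ) - 1) * (A + B) := by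
    rw [Finset.mul_sum]
    calc ∑ k ∈ (Finset.Icc 1 N₁).erase n,
        (phi lam Δ n - phi lam Δ (N₁ + 1)) * (1 / |phi lam Δ n - phi lam Δ k|)
        ≤ ∑ _k ∈ (Finset.Icc 1 N₁).erase n, (A + B) := Finset.sum_le_sum key
      _ = ((N₁ : ℝ) - 1) * (A + B) := by
          rw [Finset.sum_const, nsmul_eq_mul, hcardR]
  refine ⟨main, ?_⟩
  have habs2 : |(phi lam Δ (N₁ + 1) - phi lam Δ n) * LagD lam Δ N₁ n| ≤
      (phi lam Δ n - phi lam Δ (N₁ + 1)) *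
      (∑ k ∈ (Finset.Icc 1 N₁).erase n, 1 / |phi lam Δ n - phi lam Δ k|) := by
    rw [abs_mul, abs_of_neg (by linarith : phi lam Δ (N₁ + 1) - phi lam Δ n < 0)]
    have h1 : |LagD lam Δ N₁ n| ≤
        ∑ k ∈ (Finset.Icc 1 N₁).erase n, 1 / |phi lam Δ n - phi lam Δ k| := by
      unfold LagD
      calc |∑ k ∈ (Finset.Icc 1 N₁).erase n, 1 / (phi lam Δ n - phi lam Δ k)|
          ≤ ∑ k ∈ (Finset.Icc 1 N₁).erase n, |1 / (phi lam Δ n - phi lam Δ k)| :=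
            Finset.abs_sum_le_sum_abs _ _
        _ = ∑ k ∈ (Finset.Icc 1 N₁).erase n, 1 / |phi lam Δ n - phi lam Δ k| := by
            apply Finset.sum_congr rfl; intro k _; rw [abs_div, abs_one]
    have hnd : -(phi lam Δ (N₁ + 1) - phi lam Δ n) = phi lam Δ n - phi lam Δ (N₁ + 1) := by ring
    rw [hnd]
    exact mul_le_mul_of_nonneg_left h1 hd.le
  linarith
end
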